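/- arXiv:2007.11769 — 4 statements merged into one kernel-verified Lean document; each statement's English description precedes it below -/
import Mathlib

section
/- If S ≤ S_n is a subgroup of the stabilizer of a point k ∈ [n] that acts transitively on [n] \ {k}, and (j k) is a transposition with j ≠ k, then S together with (j k) generates the full symmetric group S_n. -/
open SimpleGraph Equiv

/-- The labeled copy `G_σ`, with edges `v_{σ⁻¹ i} v_{σ⁻¹ j}` for edges `v_i v_j` of `G`. -/
def copyG {V : Type*} (G : SimpleGraph V) (σ : Equiv.Perm V) : SimpleGraph V where
  Adj a b := G.Adj (σ a) (σ b)
  symm := ⟨fun _ _ h => G.symm.symm _ _ h⟩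
  loopless := ⟨fun _ h => G.loopless.irrefl _ h⟩

/-- The graph `G - v_r v_s + v_k v_l`. -/
def replaceG {V : Type*} (G : SimpleGraph V) (r s k l : V) : SimpleGraph V :=
  SimpleGraph.fromEdgeSet ((G.edgeSet \ {s(r, s)}) ∪ {s(k, l)})

/-- The edge-replacement `rs → kl` is feasible: `v_r v_s ∈ E(G)`, `v_k v_l` is a non-edge or
`{k,l} = {r,s}`, and `G - v_r v_s + v_k v_l ≅ G`. -/
def IsFeasible {V : Type*} (G : SimpleGraph V) (r s k l : V) : Prop :=
  G.Adj r s ∧ (Gᶜ.Adj k l ∨ s(k, l) = s(r, s)) ∧ Nonempty (replaceG G r s k l ≃g G)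

/-- The permutations realizing feasible edge-replacements of `G`. -/
def feasiblePerms {V : Type*} (G : SimpleGraph V) : Set (Equiv.Perm V) :=
  {σ | ∃ r s k l, IsFeasible G r s k l ∧ copyG G σ = replaceG G r s k l}

/-- The group `S_G` generated by all permutations realizing feasible edge-replacements. -/
def ampGroup {V : Type*} (G : SimpleGraph V) : Subgroup (Equiv.Perm V) :=
  Subgroup.closure (feasiblePerms G)

/-- `G` is a local amoeba if `S_G` is the full symmetric group. -/
def LocalAmoeba {V : Type*} (G : SimpleGraph V) : Prop := ampGroup G = ⊤

/-- Disjoint union of two graphs. -/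
def sumGraph {V W : Type*} (H : SimpleGraph V) (H' : SimpleGraph W) : SimpleGraph (V ⊕ W) :=
  SimpleGraph.map Sum.inl H ⊔ SimpleGraph.map Sum.inr H'

/-- `G` together with `t` additional isolated vertices. -/
def addIsolated {V : Type*} (G : SimpleGraph V) (t : ℕ) : SimpleGraph (V ⊕ Fin t) :=
  sumGraph G (⊥ : SimpleGraph (Fin t))

/-- `G` is a global amoeba if `G ∪ tK₁` is a local amoeba for all sufficiently large `t`. -/
def GlobalAmoeba {V : Type*} (G : SimpleGraph V) : Prop :=
  ∃ T : ℕ, ∀ t ≥ T, LocalAmoeba (addIsolated G t)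

theorem stmt10 {α : Type*} [Fintype α] [DecidableEq α] (S : Subgroup (Equiv.Perm α)) (k : α)
    (hstab : ∀ σ ∈ S, σ k = k)
    (htrans : ∀ a b : α, a ≠ k → b ≠ k → ∃ σ ∈ S, σ a = b)
    (j : α) (hj : j ≠ k) :
    Subgroup.closure ((S : Set (Equiv.Perm α)) ∪ {Equiv.swap j k}) = ⊤ := by
  set H := Subgroup.closure ((S : Set (Equiv.Perm α)) ∪ {Equiv.swap j k}) with hH
  have hSsub : ∀ σ ∈ S, σ ∈ H := fun σ hσ =>
    Subgroup.subset_closure (Or.inl hσ)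
  have hswapjk : Equiv.swap j k ∈ H := Subgroup.subset_closure (Or.inr rfl)
  have hswapk : ∀ a : α, a ≠ k → Equiv.swap a k ∈ H := by
    intro a ha
    obtain ⟨σ, hσS, hσj⟩ := htrans j a hj ha
    have : Equiv.swap a k = σ * Equiv.swap j k * σ⁻¹ := by
      rw [← Equiv.swap_apply_apply, hσj, hstab σ hσS]
    rw [this]
    exact mul_mem (mul_mem (hSsub σ hσS) hswapjk) (inv_mem (hSsub σ hσS))
  have hswap : ∀ a b : α, a ≠ b → Equiv.swap a b ∈ H := by
    intro a b hab
    by_cases hak : a = k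
    · subst hak
      rw [Equiv.swap_comm]
      exact hswapk b (Ne.symm hab)
    · by_cases hbk : b = k
      · subst hbk; exact hswapk a hak
      · have : Equiv.swap a b = Equiv.swap a k * Equiv.swap k b * (Equiv.swap a k)⁻¹ := by
          rw [← Equiv.swap_apply_apply, Equiv.swap_apply_right,
            Equiv.swap_apply_of_ne_of_ne (Ne.symm hab) hbk]
        rw [this]
        exact mul_mem (mul_mem (hswapk a hak) (Equiv.swap_comm k b ▸ hswapk b hbk))
          (inv_mem (hswapk a hak))
  rw [eq_top_iff]
  intro x _
  exact Equiv.Perm.swap_induction_on x (one_mem H)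
    fun f a b hab ih => mul_mem (hswap a b hab) ih
end

section
/- Let G be a non-empty graph on vertices v_1,...,v_n. Then G is a global amoeba if and only if for each x ∈ [n] there exists y in the S_G-orbit of x with deg_G(v_y) = 1, and these are also both equivalent to G ∪ K_1 being a local amoeba. -/
open SimpleGraph Equiv

namespace Am

open Sum

variable {α β : Type*} {V : Type*}

/-- isolated vertex -/
def Iso0 (X : SimpleGraph α) (a : α) : Prop := ∀ b, ¬ X.Adj a b

/-- degree-one vertex -/
def Deg1 (X : SimpleGraph α) (a : α) : Prop := ∃ b, X.Adj a b ∧ ∀ c, X.Adj a c → c = b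

lemma adj_inl {G : SimpleGraph V} {t : ℕ} {a b : V} :
    (addIsolated G t).Adj (inl a) (inl b) ↔ G.Adj a b := by
  simp [addIsolated, sumGraph, SimpleGraph.map_adj, SimpleGraph.map_adj']
  exact fun h => h.ne

lemma not_adj_inr {G : SimpleGraph V} {t : ℕ} {j : Fin t} (x : V ⊕ Fin t) :
    ¬ (addIsolated G t).Adj x (inr j) := by
  simp [addIsolated, sumGraph, SimpleGraph.map_adj, SimpleGraph.map_adj']

lemma not_adj_inr' {G : SimpleGraph V} {t : ℕ} {j : Fin t} (x : V ⊕ Fin t) :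
    ¬ (addIsolated G t).Adj (inr j) x := fun h => not_adj_inr _ h.symm

lemma iso0_inr {G : SimpleGraph V} {t : ℕ} (j : Fin t) : Iso0 (addIsolated G t) (inr j) :=
  fun _ => not_adj_inr' _

lemma iso0_inl {G : SimpleGraph V} {t : ℕ} {v : V} :
    Iso0 (addIsolated G t) (inl v) ↔ Iso0 G v := by
  constructor
  · exact fun h b hb => h (inl b) (adj_inl.2 hb)
  · intro h b hb
    cases b with
    | inl b => exact h b (adj_inl.1 hb)
    | inr j => exact not_adj_inr _ hb

lemma repl_adj {G : SimpleGraph α} {r s k l a b : α} :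
    (replaceG G r s k l).Adj a b ↔
      (G.Adj a b ∧ s(a, b) ≠ s(r, s)) ∨ (s(a, b) = s(k, l) ∧ a ≠ b) := by
  simp only [replaceG, SimpleGraph.fromEdgeSet_adj, Set.mem_union, Set.mem_diff,
    Set.mem_singleton_iff, SimpleGraph.mem_edgeSet]
  constructor
  · rintro ⟨h | h, hne⟩
    · exact Or.inl h
    · exact Or.inr ⟨h, hne⟩
  · rintro (⟨h1, h2⟩ | ⟨h1, h2⟩)
    · exact ⟨Or.inl ⟨h1, h2⟩, h1.ne⟩
    · exact ⟨Or.inr h1, h2⟩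

lemma copy_adj {G : SimpleGraph α} {σ : Equiv.Perm α} {a b : α} :
    (copyG G σ).Adj a b ↔ G.Adj (σ a) (σ b) := Iff.rfl

lemma copy_copy {G : SimpleGraph α} {σ τ : Equiv.Perm α} :
    copyG (copyG G σ) τ = copyG G (τ.trans σ) := rfl

/-- transporting Iso0 along a copy equation -/
lemma iso0_transport {X Y : SimpleGraph α} {σ : Equiv.Perm α}
    (h : copyG Y σ = X) {a : α} : Iso0 X a ↔ Iso0 Y (σ a) := by
  subst h
  constructor
  · intro h b
    have := h (σ.symm b)
    rw [copy_adj] at this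
    simpa using this
  · intro h b hb
    exact h _ hb

lemma deg1_transport {X Y : SimpleGraph α} {σ : Equiv.Perm α}
    (h : copyG Y σ = X) {a : α} : Deg1 X a ↔ Deg1 Y (σ a) := by
  subst h
  constructor
  · rintro ⟨b, hb, hu⟩
    refine ⟨σ b, hb, fun c hc => ?_⟩
    have := hu (σ.symm c) (by rwa [copy_adj, Equiv.apply_symm_apply])
    rw [← this]; simp
  · rintro ⟨b, hb, hu⟩
    exact ⟨σ.symm b, by rwa [copy_adj, Equiv.apply_symm_apply], fun c hc => by
      have := hu (σ c) hc; rw [← this]; simp⟩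

lemma deg1_iff_degree {G : SimpleGraph V} [Fintype V] [DecidableRel G.Adj] {v : V} :
    Deg1 G v ↔ G.degree v = 1 := by
  rw [← SimpleGraph.card_neighborFinset_eq_degree, Finset.card_eq_one]
  constructor
  · rintro ⟨b, hb, hu⟩
    exact ⟨b, Finset.eq_singleton_iff_unique_mem.2
      ⟨by simpa using hb, fun c hc => hu c (by simpa using hc)⟩⟩
  · rintro ⟨b, hb⟩
    have hmem : ∀ c, G.Adj v c ↔ c = b := by
      intro c
      rw [← SimpleGraph.mem_neighborFinset, hb, Finset.mem_singleton]
    exact ⟨b, (hmem b).2 rfl, fun c hc => (hmem c).1 hc⟩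

end Am

namespace Am

open Sum

variable {α β : Type*} {V : Type*}

lemma sym2_inl {a b c d : V} {t : ℕ} :
    s(Sum.inl a, Sum.inl b) = (s(Sum.inl c, Sum.inl d) : Sym2 (V ⊕ Fin t)) ↔
      s(a, b) = s(c, d) := by
  rw [Sym2.eq_iff, Sym2.eq_iff]
  simp [Sum.inl.injEq]

lemma replaceG_comm {G : SimpleGraph α} {r s k l : α} :
    replaceG G r s k l = replaceG G r s l k := by
  unfold replaceG
  rw [Sym2.eq_swap (a := k)]

lemma isFeasible_comm {G : SimpleGraph α} {r s k l : α} (h : IsFeasible G r s k l) :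
    IsFeasible G r s l k := by
  obtain ⟨h1, h2, h3⟩ := h
  refine ⟨h1, ?_, by rwa [← replaceG_comm]⟩
  rcases h2 with h2 | h2
  · exact Or.inl h2.symm
  · exact Or.inr (by rwa [Sym2.eq_swap (a := l)])

lemma repl_tilde_adj_inl {G : SimpleGraph V} {t : ℕ} {r s : V} {k l : V ⊕ Fin t} {a b : V} :
    (replaceG (addIsolated G t) (inl r) (inl s) k l).Adj (inl a) (inl b) ↔
      (G.Adj a b ∧ s(a, b) ≠ s(r, s)) ∨ (s(inl a, inl b) = s(k, l) ∧ a ≠ b) := by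
  rw [repl_adj, adj_inl]
  constructor
  · rintro (⟨h1, h2⟩ | ⟨h1, h2⟩)
    · exact Or.inl ⟨h1, fun hc => h2 (by rw [← sym2_inl] at hc; exact hc)⟩
    · exact Or.inr ⟨h1, fun hc => h2 (by rw [hc])⟩
  · rintro (⟨h1, h2⟩ | ⟨h1, h2⟩)
    · exact Or.inl ⟨h1, fun hc => h2 (sym2_inl.1 hc)⟩
    · exact Or.inr ⟨h1, by simpa using h2⟩

end Am

namespace Am

open Sum Equiv

variable {α β : Type*} {V : Type*}

lemma exists_edge {G : SimpleGraph V} (hne : G ≠ ⊥) : ∃ a b, G.Adj a b := by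
  by_contra h
  push_neg at h
  exact hne (by ext a b; simp [h a b])

lemma survive_edge {G : SimpleGraph α} {v : α} (h0 : ¬ Iso0 G v) (h1 : ¬ Deg1 G v)
    (r s : α) : ∃ b, G.Adj v b ∧ s(v, b) ≠ s(r, s) := by
  simp only [Iso0, not_forall, not_not] at h0
  obtain ⟨b₁, hb₁⟩ := h0
  simp only [Deg1, not_exists] at h1
  have := h1 b₁
  push_neg at this
  obtain ⟨b₂, hb₂, hne⟩ := this hb₁
  by_cases h : s(v, b₁) = s(r, s)
  · refine ⟨b₂, hb₂, fun hc => ?_⟩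
    rw [← h] at hc
    rw [Sym2.eq_iff] at hc
    rcases hc with ⟨_, h2⟩ | ⟨h2, _⟩
    · exact hne h2
    · exact G.loopless.irrefl v (by rwa [← h2] at hb₁)
  · exact ⟨b₁, hb₁, h⟩

lemma not_iso0_repl {G : SimpleGraph α} {v : α} (h0 : ¬ Iso0 G v) (h1 : ¬ Deg1 G v)
    (r s k l : α) : ¬ Iso0 (replaceG G r s k l) v := by
  obtain ⟨b, hb, hne⟩ := survive_edge h0 h1 r s
  exact fun h => h b (repl_adj.2 (Or.inl ⟨hb, hne⟩))

lemma not_iso0_repl_tilde {G : SimpleGraph V} {t : ℕ} {v : V} (h0 : ¬ Iso0 G v)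
    (h1 : ¬ Deg1 G v) (r s : V) (k l : V ⊕ Fin t) :
    ¬ Iso0 (replaceG (addIsolated G t) (inl r) (inl s) k l) (inl v) := by
  obtain ⟨b, hb, hne⟩ := survive_edge h0 h1 r s
  exact fun h => h (inl b) (repl_tilde_adj_inl.2 (Or.inl ⟨hb, hne⟩))

lemma repl_adj_inr {G : SimpleGraph V} {t : ℕ} {r s : V} {k l : V ⊕ Fin t} {j : Fin t}
    {y : V ⊕ Fin t} :
    (replaceG (addIsolated G t) (inl r) (inl s) k l).Adj (inr j) y ↔
      (s(inr j, y) = s(k, l) ∧ (inr j : V ⊕ Fin t) ≠ y) := by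
  rw [repl_adj]
  simp [not_adj_inr']

/-- In the all-inl case, inr vertices are isolated in the replaced graph. -/
lemma iso0_repl_inr {G : SimpleGraph V} {t : ℕ} {r s k l : V} {j : Fin t} :
    Iso0 (replaceG (addIsolated G t) (inl r) (inl s) (inl k) (inl l)) (inr j) := by
  intro y hy
  rw [repl_adj_inr] at hy
  obtain ⟨h1, _⟩ := hy
  rw [Sym2.eq_iff] at h1
  rcases h1 with ⟨h, _⟩ | ⟨h, _⟩ <;> exact nomatch h

/-- In the all-inl case, Iso0 on inl matches the V-level replaced graph. -/
lemma iso0_repl_inl {G : SimpleGraph V} {t : ℕ} {r s k l : V} {v : V} :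
    Iso0 (replaceG (addIsolated G t) (inl r) (inl s) (inl k) (inl l)) (inl v) ↔
      Iso0 (replaceG G r s k l) v := by
  constructor
  · intro h b hb
    refine h (inl b) ?_
    rw [repl_tilde_adj_inl]
    rw [repl_adj] at hb
    rcases hb with ⟨h1, h2⟩ | ⟨h1, h2⟩
    · exact Or.inl ⟨h1, h2⟩
    · exact Or.inr ⟨sym2_inl.2 h1, h2⟩
  · intro h b hb
    cases b with
    | inl b =>
      rw [repl_tilde_adj_inl] at hb
      refine h b (repl_adj.2 ?_)
      rcases hb with ⟨h1, h2⟩ | ⟨h1, h2⟩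
      · exact Or.inl ⟨h1, h2⟩
      · exact Or.inr ⟨sym2_inl.1 h1, h2⟩
    | inr j =>
      exact iso0_repl_inr _ hb.symm

end Am

namespace Am

open Sum Equiv

variable {α β : Type*} {V : Type*}

lemma sym2_congr {f : α → α} (hf : Function.Injective f) {a b c d : α} :
    s(f a, f b) = s(f c, f d) ↔ s(a, b) = s(c, d) := by
  rw [Sym2.eq_iff, Sym2.eq_iff]
  constructor
  · rintro (⟨h1, h2⟩ | ⟨h1, h2⟩)
    · exact Or.inl ⟨hf h1, hf h2⟩
    · exact Or.inr ⟨hf h1, hf h2⟩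
  · rintro (⟨h1, h2⟩ | ⟨h1, h2⟩)
    · exact Or.inl ⟨congrArg f h1, congrArg f h2⟩
    · exact Or.inr ⟨congrArg f h1, congrArg f h2⟩

lemma copy_swap [DecidableEq α] {X : SimpleGraph α} {r s k u z : α}
    (hu : Iso0 X u) (hz : Iso0 (replaceG X r s k u) z)
    (hzu : z ≠ u) (hzk : z ≠ k) (hku : k ≠ u) :
    copyG (replaceG X r s k u) (Equiv.swap u z) = replaceG X r s k z := by
  set τ := Equiv.swap u z with hτ
  have hz1 : ∀ c, X.Adj z c → s(z, c) = s(r, s) := by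
    intro c hc
    have := hz c
    rw [repl_adj] at this
    push_neg at this
    exact this.1 hc
  have fwd : ∀ a b, X.Adj (τ a) (τ b) ∧ s(τ a, τ b) ≠ s(r, s) →
      X.Adj a b ∧ s(a, b) ≠ s(r, s) := by
    rintro a b ⟨h1, h2⟩
    rcases eq_or_ne a u with rfl | hau
    · rw [hτ, Equiv.swap_apply_left] at h1 h2
      exact absurd (hz1 _ h1) h2
    rcases eq_or_ne a z with rfl | haz
    · rw [hτ, Equiv.swap_apply_right] at h1
      exact absurd h1 (hu _)
    rw [hτ, Equiv.swap_apply_of_ne_of_ne hau haz] at h1 h2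
    rcases eq_or_ne b u with rfl | hbu
    · rw [Equiv.swap_apply_left] at h1 h2
      refine absurd ?_ h2
      rw [Sym2.eq_swap]
      exact hz1 _ h1.symm
    rcases eq_or_ne b z with rfl | hbz
    · rw [Equiv.swap_apply_right] at h1
      exact absurd h1.symm (hu _)
    rw [Equiv.swap_apply_of_ne_of_ne hbu hbz] at h1 h2
    exact ⟨h1, h2⟩
  ext a b
  rw [copy_adj, repl_adj, repl_adj]
  have hsec : s(τ a, τ b) = s(k, u) ↔ s(a, b) = s(k, z) := by
    have hk : τ k = k := Equiv.swap_apply_of_ne_of_ne hku hzk.symm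
    have huz : τ z = u := Equiv.swap_apply_right u z
    conv_lhs => rw [← hk, ← huz]
    exact sym2_congr τ.injective
  have hne : τ a ≠ τ b ↔ a ≠ b := by
    constructor
    · exact fun h hc => h (by rw [hc])
    · exact fun h hc => h (τ.injective hc)
  constructor
  · rintro (h | h)
    · exact Or.inl (fwd a b h)
    · exact Or.inr ⟨hsec.1 h.1, hne.1 h.2⟩
  · rintro (h | h)
    · have := fwd (τ a) (τ b)
      rw [Equiv.swap_apply_self, Equiv.swap_apply_self] at this
      have h2 := this ⟨h.1, h.2⟩
      exact Or.inl h2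
    · exact Or.inr ⟨hsec.2 h.1, hne.2 h.2⟩

end Am

namespace Am

open Sum Equiv

variable {V : Type*}

lemma adj_repl_inl_iff {G : SimpleGraph V} {t : ℕ} {r s k l a b : V} :
    (replaceG (addIsolated G t) (inl r) (inl s) (inl k) (inl l)).Adj (inl a) (inl b) ↔
      (replaceG G r s k l).Adj a b := by
  rw [repl_tilde_adj_inl, repl_adj]
  constructor
  · rintro (h | ⟨h1, h2⟩)
    · exact Or.inl h
    · exact Or.inr ⟨sym2_inl.1 h1, h2⟩
  · rintro (h | ⟨h1, h2⟩)
    · exact Or.inl h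
    · exact Or.inr ⟨sym2_inl.2 h1, h2⟩

/-- The patching lemma. -/
lemma patch [Fintype V] {G : SimpleGraph V} {t : ℕ} {σ : Equiv.Perm (V ⊕ Fin t)}
    {r s k l : V}
    (hfe : IsFeasible (addIsolated G t) (inl r) (inl s) (inl k) (inl l))
    (hcopy : copyG (addIsolated G t) σ =
      replaceG (addIsolated G t) (inl r) (inl s) (inl k) (inl l)) :
    ∃ φ : Equiv.Perm V, φ ∈ feasiblePerms G ∧ IsFeasible G r s k l ∧
      copyG G φ = replaceG G r s k l ∧
      ∀ v : V, ¬ Iso0 (replaceG G r s k l) v → σ (inl v) = inl (φ v) := by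
  classical
  have hadj : ∀ a b, (addIsolated G t).Adj (σ a) (σ b) ↔
      (replaceG (addIsolated G t) (inl r) (inl s) (inl k) (inl l)).Adj a b := by
    intro a b
    rw [← hcopy]
    exact Iff.rfl
  have htrans : ∀ a, Iso0 (replaceG (addIsolated G t) (inl r) (inl s) (inl k) (inl l)) a ↔
      Iso0 (addIsolated G t) (σ a) := fun a => iso0_transport hcopy
  have hkey : ∀ v : V, ¬ Iso0 (replaceG G r s k l) v → ∃ y : V, σ (inl v) = inl y := by
    intro v hv
    have h2 : ¬ Iso0 (addIsolated G t) (σ (inl v)) :=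
      fun h => hv (iso0_repl_inl.1 ((htrans _).2 h))
    cases hy : σ (inl v) with
    | inl y => exact ⟨y, rfl⟩
    | inr j => exact absurd (hy ▸ iso0_inr j) h2
  set g : V → V := fun v => Sum.elim id (fun _ => v) (σ (inl v)) with hgdef
  have hg : ∀ v : V, ¬ Iso0 (replaceG G r s k l) v → σ (inl v) = inl (g v) := by
    intro v hv
    obtain ⟨y, hy⟩ := hkey v hv
    rw [hy]
    simp only [hgdef, hy, Sum.elim_inl, id_eq]
  set P : Finset V := Finset.univ.filter (fun v => ¬ Iso0 (replaceG G r s k l) v) with hP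
  set Q : Finset V := Finset.univ.filter (fun v => ¬ Iso0 G v) with hQ
  have hmemP : ∀ v, v ∈ P ↔ ¬ Iso0 (replaceG G r s k l) v := by intro v; simp [hP]
  have hmemQ : ∀ v, v ∈ Q ↔ ¬ Iso0 G v := by intro v; simp [hQ]
  have hgQ : ∀ v ∈ P, g v ∈ Q := by
    intro v hv
    rw [hmemP] at hv
    rw [hmemQ, ← iso0_inl (t := t), ← hg v hv]
    exact fun h => hv (iso0_repl_inl.1 ((htrans _).2 h))
  have hginj : ∀ v ∈ P, ∀ v' ∈ P, g v = g v' → v = v' := by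
    intro v hv v' hv' hgg
    have h1 : σ (inl v) = σ (inl v') := by
      rw [hg v ((hmemP v).1 hv), hg v' ((hmemP v').1 hv'), hgg]
    exact inl_injective (σ.injective h1)
  have hgsurj : ∀ y ∈ Q, ∃ v ∈ P, g v = y := by
    intro y hy
    rw [hmemQ] at hy
    have h1 : ¬ Iso0 (addIsolated G t) (inl y) := fun h => hy (iso0_inl.1 h)
    have h2 : ¬ Iso0 (replaceG (addIsolated G t) (inl r) (inl s) (inl k) (inl l))
        (σ.symm (inl y)) := by
      intro h
      rw [htrans, σ.apply_symm_apply] at h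
      exact h1 h
    cases hc : σ.symm (inl y) with
    | inl v =>
      have hv : ¬ Iso0 (replaceG G r s k l) v := by
        rw [hc] at h2
        exact fun h => h2 (iso0_repl_inl.2 h)
      refine ⟨v, (hmemP v).2 hv, ?_⟩
      have : σ (inl v) = inl y := by
        rw [← hc, σ.apply_symm_apply]
      rw [hg v hv] at this
      exact inl_injective this
    | inr j =>
      exact absurd (show Iso0 _ (σ.symm (inl y)) by rw [hc]; exact iso0_repl_inr) h2
  have hcard : P.card = Q.card := by
    refine Finset.card_bij (fun v _ => g v) (fun v hv => hgQ v hv) hginj ?_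
    intro y hy
    obtain ⟨v, hv, hgv⟩ := hgsurj y hy
    exact ⟨v, hv, hgv⟩
  set Pc : Finset V := Finset.univ.filter (fun v => Iso0 (replaceG G r s k l) v) with hPc
  set Qc : Finset V := Finset.univ.filter (fun v => Iso0 G v) with hQc
  have hcardc : Pc.card = Qc.card := by
    have h1 := Finset.card_filter_add_card_filter_not
      (s := (Finset.univ : Finset V)) (p := fun v => Iso0 (replaceG G r s k l) v)
    have h2 := Finset.card_filter_add_card_filter_not
      (s := (Finset.univ : Finset V)) (p := fun v => Iso0 G v)
    simp only [← hP, ← hQ, ← hPc, ← hQc] at h1 h2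
    omega
  have e : {v // v ∈ Pc} ≃ {v // v ∈ Qc} :=
    Fintype.equivOfCardEq (by rw [Fintype.card_coe, Fintype.card_coe, hcardc])
  have hmemPc : ∀ v, v ∉ P ↔ v ∈ Pc := by
    intro v
    simp [hP, hPc, not_not]
  have hmemQc : ∀ v, v ∉ Q ↔ v ∈ Qc := by
    intro v
    simp [hQ, hQc, not_not]
  set φ₀ : V → V := fun v =>
    if h : v ∈ P then g v else (e ⟨v, (hmemPc v).1 h⟩ : {v // v ∈ Qc}).1 with hφ₀
  have hφP : ∀ v ∈ P, φ₀ v = g v := by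
    intro v hv
    simp only [hφ₀, dif_pos hv]
  have hφPc : ∀ v (h : v ∉ P), φ₀ v ∈ Qc := by
    intro v h
    simp only [hφ₀, dif_neg h]
    exact (e ⟨v, (hmemPc v).1 h⟩).2
  have hbij : Function.Bijective φ₀ := by
    constructor
    · intro a b hab
      by_cases ha : a ∈ P <;> by_cases hb : b ∈ P
      · rw [hφP a ha, hφP b hb] at hab
        exact hginj a ha b hb hab
      · exfalso
        rw [hφP a ha] at hab
        have h1 := hgQ a ha
        rw [hab] at h1
        exact ((hmemQc _).2 (hφPc b hb)) h1
      · exfalso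
        rw [hφP b hb] at hab
        have h1 := hgQ b hb
        rw [← hab] at h1
        exact ((hmemQc _).2 (hφPc a ha)) h1
      · simp only [hφ₀, dif_neg ha, dif_neg hb] at hab
        have := e.injective (Subtype.ext hab)
        exact congrArg Subtype.val this
    · intro y
      by_cases hy : y ∈ Q
      · obtain ⟨v, hv, hgv⟩ := hgsurj y hy
        exact ⟨v, by rw [hφP v hv, hgv]⟩
      · have hyc : y ∈ Qc := (hmemQc y).1 hy
        set w := e.symm ⟨y, hyc⟩ with hw
        have hwP : (w : V) ∉ P := by
          rw [hmemPc]
          exact w.2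
        refine ⟨w, ?_⟩
        simp only [hφ₀, dif_neg hwP]
        have : (⟨(w : V), (hmemPc _).1 hwP⟩ : {v // v ∈ Pc}) = w := Subtype.ext rfl
        rw [this, hw, e.apply_symm_apply]
  set φ : Equiv.Perm V := Equiv.ofBijective φ₀ hbij with hφ
  have hφapp : ∀ v, φ v = φ₀ v := fun v => rfl
  have hagree : ∀ v : V, ¬ Iso0 (replaceG G r s k l) v → σ (inl v) = inl (φ v) := by
    intro v hv
    rw [hφapp, hφP v ((hmemP v).2 hv)]
    exact hg v hv
  have hiff : ∀ a b, (replaceG G r s k l).Adj a b ↔ G.Adj (φ a) (φ b) := by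
    intro a b
    constructor
    · intro h
      have ha : ¬ Iso0 (replaceG G r s k l) a := fun hh => hh b h
      have hb : ¬ Iso0 (replaceG G r s k l) b := fun hh => hh a h.symm
      have h1 : (replaceG (addIsolated G t) (inl r) (inl s) (inl k) (inl l)).Adj
          (inl a) (inl b) := adj_repl_inl_iff.2 h
      have h2 := (hadj (inl a) (inl b)).2 h1
      rw [hagree a ha, hagree b hb] at h2
      exact adj_inl.1 h2
    · intro h
      have ha : a ∈ P := by
        by_contra hc
        have := hφPc a hc
        rw [← hφapp] at this
        exact ((hmemQc _).2 this) ((hmemQ _).2 (fun hh => hh _ h))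
      have hb : b ∈ P := by
        by_contra hc
        have := hφPc b hc
        rw [← hφapp] at this
        exact ((hmemQc _).2 this) ((hmemQ _).2 (fun hh => hh _ h.symm))
      have h2 : (addIsolated G t).Adj (σ (inl a)) (σ (inl b)) := by
        rw [hagree a ((hmemP a).1 ha), hagree b ((hmemP b).1 hb)]
        exact adj_inl.2 h
      exact adj_repl_inl_iff.1 ((hadj _ _).1 h2)
  have hfeG : IsFeasible G r s k l := by
    refine ⟨adj_inl.1 hfe.1, ?_, ?_⟩
    · rcases hfe.2.1 with h | h
      · left
        rw [SimpleGraph.compl_adj] at h ⊢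
        exact ⟨fun hc => h.1 (congrArg inl hc), fun hc => h.2 (adj_inl.2 hc)⟩
      · right
        exact sym2_inl.1 h
    · exact ⟨⟨φ, fun {a b} => (hiff a b).symm⟩⟩
  have hcopyG : copyG G φ = replaceG G r s k l := by
    ext a b
    exact (hiff a b).symm
  exact ⟨φ, ⟨r, s, k, l, hfeG, hcopyG⟩, hfeG, hcopyG, hagree⟩

end Am

namespace Am

open Sum Equiv

variable {α : Type*} {V : Type*}

lemma iso_of_copy {X Y : SimpleGraph α} {σ : Equiv.Perm α} (h : copyG X σ = Y) :
    Nonempty (Y ≃g X) := by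
  subst h
  exact ⟨⟨σ, Iff.rfl⟩⟩

lemma mem_feasible_of_iso {G : SimpleGraph α} {r s k l : α} (hfe : IsFeasible G r s k l)
    (e : replaceG G r s k l ≃g G) :
    (e : Equiv.Perm α) ∈ feasiblePerms G ∧ copyG G (e : Equiv.Perm α) = replaceG G r s k l := by
  have hc : copyG G (e : Equiv.Perm α) = replaceG G r s k l := by
    ext a b
    exact e.map_rel_iff
  exact ⟨⟨r, s, k, l, hfe, hc⟩, hc⟩

lemma replaceG_self {G : SimpleGraph α} {a b : α} (h : G.Adj a b) :
    replaceG G a b a b = G := by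
  unfold replaceG
  rw [Set.diff_union_self, Set.union_eq_self_of_subset_right
    (Set.singleton_subset_iff.2 ((SimpleGraph.mem_edgeSet G).2 h)),
    SimpleGraph.fromEdgeSet_edgeSet]

lemma mem_feasible_of_copy_self {G : SimpleGraph α} {σ : Equiv.Perm α}
    (hne : G ≠ ⊥) (h : copyG G σ = G) : σ ∈ feasiblePerms G := by
  obtain ⟨a, b, hab⟩ := exists_edge hne
  exact ⟨a, b, a, b, ⟨hab, Or.inr rfl, by rw [replaceG_self hab]; exact ⟨Iso.refl⟩⟩,
    by rw [replaceG_self hab]; exact h⟩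

lemma swap_isolated_mem [DecidableEq α] {G : SimpleGraph α} {w v : α}
    (hne : G ≠ ⊥) (hw : Iso0 G w) (hv : Iso0 G v) :
    Equiv.swap w v ∈ feasiblePerms G := by
  apply mem_feasible_of_copy_self hne
  have fwd : ∀ c d, G.Adj c d → G.Adj (Equiv.swap w v c) (Equiv.swap w v d) := by
    intro c d h
    have hcw : c ≠ w := fun hc => hw d (hc ▸ h)
    have hcv : c ≠ v := fun hc => hv d (hc ▸ h)
    have hdw : d ≠ w := fun hc => hw c (hc ▸ h.symm)
    have hdv : d ≠ v := fun hc => hv c (hc ▸ h.symm)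
    rwa [Equiv.swap_apply_of_ne_of_ne hcw hcv, Equiv.swap_apply_of_ne_of_ne hdw hdv]
  ext c d
  rw [copy_adj]
  constructor
  · intro h
    have := fwd _ _ h
    rwa [Equiv.swap_apply_self, Equiv.swap_apply_self] at this
  · exact fwd c d

/-- Counting: for a realized replacement whose new edge touches the added vertices,
some `inl` vertex is isolated in the replaced graph. -/
lemma exists_iso0_inl [Fintype V] {G : SimpleGraph V} {t : ℕ} {σ : Equiv.Perm (V ⊕ Fin t)}
    {r s : V} {k l : V ⊕ Fin t} {j : Fin t}
    (hcopy : copyG (addIsolated G t) σ = replaceG (addIsolated G t) (inl r) (inl s) k l)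
    (hj : k = inr j ∨ l = inr j) (hkl : k ≠ l) :
    ∃ z : V, Iso0 (replaceG (addIsolated G t) (inl r) (inl s) k l) (inl z) := by
  classical
  by_contra hcon
  push_neg at hcon
  have htrans : ∀ a, Iso0 (replaceG (addIsolated G t) (inl r) (inl s) k l) a ↔
      Iso0 (addIsolated G t) (σ a) := fun a => iso0_transport hcopy
  set A1 : Finset (V ⊕ Fin t) := Finset.univ.filter
    (fun a => Iso0 (replaceG (addIsolated G t) (inl r) (inl s) k l) a) with hA1
  set A2 : Finset (V ⊕ Fin t) := Finset.univ.filter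
    (fun a => Iso0 (addIsolated G t) a) with hA2
  have hcard : A1.card = A2.card := by
    refine Finset.card_bij (fun a _ => σ a) ?_ ?_ ?_
    · intro a ha
      simp only [hA1, Finset.mem_filter, Finset.mem_univ, true_and] at ha
      simp only [hA2, Finset.mem_filter, Finset.mem_univ, true_and]
      exact (htrans a).1 ha
    · intro a _ a' _ h
      exact σ.injective h
    · intro b hb
      simp only [hA2, Finset.mem_filter, Finset.mem_univ, true_and] at hb
      refine ⟨σ.symm b, ?_, σ.apply_symm_apply b⟩
      simp only [hA1, Finset.mem_filter, Finset.mem_univ, true_and]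
      rw [htrans, σ.apply_symm_apply]
      exact hb
  have hjne : ¬ Iso0 (replaceG (addIsolated G t) (inl r) (inl s) k l) (inr j) := by
    rcases hj with rfl | rfl
    · intro h
      exact h l (repl_adj.2 (Or.inr ⟨rfl, hkl⟩))
    · intro h
      exact h k (repl_adj.2 (Or.inr ⟨Sym2.eq_swap, fun hc => hkl hc.symm⟩))
  have hsub : A1 ⊆ (Finset.univ.erase j).image (fun i : Fin t => (inr i : V ⊕ Fin t)) := by
    intro a ha
    simp only [hA1, Finset.mem_filter, Finset.mem_univ, true_and] at ha
    cases a with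
    | inl z => exact absurd ha (hcon z)
    | inr i =>
      simp only [Finset.mem_image, Finset.mem_erase, Finset.mem_univ, and_true]
      exact ⟨i, fun hc => hjne (hc ▸ ha), rfl⟩
  have hsub2 : (Finset.univ.image (fun i : Fin t => (inr i : V ⊕ Fin t))) ⊆ A2 := by
    intro a ha
    simp only [Finset.mem_image, Finset.mem_univ, true_and] at ha
    obtain ⟨i, rfl⟩ := ha
    simp only [hA2, Finset.mem_filter, Finset.mem_univ, true_and]
    exact iso0_inr i
  have h1 : A1.card ≤ t - 1 := by
    calc A1.card ≤ _ := Finset.card_le_card hsub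
    _ ≤ (Finset.univ.erase j).card := Finset.card_image_le
    _ = t - 1 := by rw [Finset.card_erase_of_mem (Finset.mem_univ j)]; simp
  have h2 : t ≤ A2.card := by
    calc t = (Finset.univ : Finset (Fin t)).card := by simp
    _ = (Finset.univ.image (fun i : Fin t => (inr i : V ⊕ Fin t))).card :=
      (Finset.card_image_of_injective _ inr_injective).symm
    _ ≤ A2.card := Finset.card_le_card hsub2
  have ht : 1 ≤ t := Fin.pos j
  omega

end Am

namespace Am

open Sum Equiv

variable {V : Type*}

lemma not_iso0_newedge {G : SimpleGraph V} {t : ℕ} {r s : V} {k l : V ⊕ Fin t}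
    (hkl : k ≠ l) :
    ¬ Iso0 (replaceG (addIsolated G t) (inl r) (inl s) k l) k := by
  intro h
  exact h l (repl_adj.2 (Or.inr ⟨rfl, hkl⟩))

lemma not_iso0_newedge' {G : SimpleGraph V} {t : ℕ} {r s : V} {k l : V ⊕ Fin t}
    (hkl : k ≠ l) :
    ¬ Iso0 (replaceG (addIsolated G t) (inl r) (inl s) k l) l := by
  intro h
  exact h k (repl_adj.2 (Or.inr ⟨Sym2.eq_swap, fun hc => hkl hc.symm⟩))

lemma reduce_with [Fintype V] [DecidableEq V] {G : SimpleGraph V} {t : ℕ} {σ : Equiv.Perm (V ⊕ Fin t)}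
    {r s : V} {k : V ⊕ Fin t} {j : Fin t} {z : V}
    (hfe : IsFeasible (addIsolated G t) (inl r) (inl s) k (inr j))
    (hcopy : copyG (addIsolated G t) σ =
      replaceG (addIsolated G t) (inl r) (inl s) k (inr j))
    (hz : Iso0 (replaceG (addIsolated G t) (inl r) (inl s) k (inr j)) (inl z))
    (hkj : k ≠ inr j) :
    IsFeasible (addIsolated G t) (inl r) (inl s) k (inl z) ∧
    copyG (addIsolated G t) ((Equiv.swap (inr j) (inl z)).trans σ) =
      replaceG (addIsolated G t) (inl r) (inl s) k (inl z) := by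
  classical
  have hzk : (inl z : V ⊕ Fin t) ≠ k := by
    intro hc
    exact not_iso0_newedge hkj (hc ▸ hz)
  have hcopy2 : copyG (addIsolated G t) ((Equiv.swap (inr j) (inl z)).trans σ) =
      replaceG (addIsolated G t) (inl r) (inl s) k (inl z) := by
    rw [← copy_copy, hcopy]
    exact copy_swap (iso0_inr j) hz (fun hc => nomatch hc) hzk hkj
  refine ⟨⟨hfe.1, ?_, iso_of_copy hcopy2⟩, hcopy2⟩
  by_cases hadj : (addIsolated G t).Adj k (inl z)
  · right
    have h1 := hz k
    rw [repl_adj] at h1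
    push_neg at h1
    have h2 := h1.1 hadj.symm
    rw [Sym2.eq_swap] at h2
    exact h2
  · left
    rw [SimpleGraph.compl_adj]
    exact ⟨fun hc => hzk hc.symm, hadj⟩

lemma reduce_one [Fintype V] [DecidableEq V] {G : SimpleGraph V} {t : ℕ} {σ : Equiv.Perm (V ⊕ Fin t)}
    {r s : V} {k : V ⊕ Fin t} {j : Fin t}
    (hfe : IsFeasible (addIsolated G t) (inl r) (inl s) k (inr j))
    (hcopy : copyG (addIsolated G t) σ =
      replaceG (addIsolated G t) (inl r) (inl s) k (inr j))
    (hkj : k ≠ inr j) :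
    ∃ z : V,
      Iso0 (replaceG (addIsolated G t) (inl r) (inl s) k (inr j)) (inl z) ∧
      IsFeasible (addIsolated G t) (inl r) (inl s) k (inl z) ∧
      copyG (addIsolated G t) ((Equiv.swap (inr j) (inl z)).trans σ) =
        replaceG (addIsolated G t) (inl r) (inl s) k (inl z) := by
  obtain ⟨z, hz⟩ := exists_iso0_inl hcopy (Or.inr rfl) hkj
  obtain ⟨h1, h2⟩ := reduce_with hfe hcopy hz hkj
  exact ⟨z, hz, h1, h2⟩

end Am

namespace Am

open Sum Equiv

variable {V : Type*}

lemma adj_ends_inl {G : SimpleGraph V} {t : ℕ} {r' s' : V ⊕ Fin t}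
    (h : (addIsolated G t).Adj r' s') : ∃ r s : V, r' = inl r ∧ s' = inl s := by
  cases r' with
  | inl r =>
    cases s' with
    | inl s => exact ⟨r, s, rfl, rfl⟩
    | inr j => exact absurd h (not_adj_inr _)
  | inr j => exact absurd h (not_adj_inr' _)

lemma feasible_ne {G : SimpleGraph V} {t : ℕ} {r s : V} {k l : V ⊕ Fin t}
    (hfe : IsFeasible (addIsolated G t) (inl r) (inl s) k l) : k ≠ l := by
  rcases hfe.2.1 with h | h
  · rw [SimpleGraph.compl_adj] at h
    exact h.1
  · rw [Sym2.eq_iff] at h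
    have hrs : r ≠ s := by
      have := hfe.1.ne
      exact fun hc => this (congrArg inl hc)
    rcases h with ⟨h1, h2⟩ | ⟨h1, h2⟩
    · rw [h1, h2]
      intro hc
      injection hc with hc
      exact hrs hc
    · rw [h1, h2]
      intro hc
      injection hc with hc
      exact hrs hc.symm
  
/-- Any realized replacement of `G ∪ tK₁` can be normalized to an all-`inl` one whose
realizing permutation agrees with the original on `inl` vertices of degree at least 2,
and which keeps any `inl` endpoint of the new edge. -/
lemma normalize [Fintype V] [DecidableEq V] {G : SimpleGraph V} {t : ℕ}
    {σ : Equiv.Perm (V ⊕ Fin t)} {r s : V} {k l : V ⊕ Fin t}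
    (hfe : IsFeasible (addIsolated G t) (inl r) (inl s) k l)
    (hcopy : copyG (addIsolated G t) σ = replaceG (addIsolated G t) (inl r) (inl s) k l) :
    ∃ (k₀ l₀ : V) (ρ : Equiv.Perm (V ⊕ Fin t)),
      IsFeasible (addIsolated G t) (inl r) (inl s) (inl k₀) (inl l₀) ∧
      copyG (addIsolated G t) ρ =
        replaceG (addIsolated G t) (inl r) (inl s) (inl k₀) (inl l₀) ∧
      (∀ v : V, ¬ Iso0 G v → ¬ Deg1 G v → ρ (inl v) = σ (inl v)) ∧
      (∀ v : V, (inl v = k ∨ inl v = l) → k₀ = v ∨ l₀ = v) := by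
  have hkl := feasible_ne hfe
  cases k with
  | inl k₁ =>
    cases l with
    | inl l₁ =>
      refine ⟨k₁, l₁, σ, hfe, hcopy, fun v _ _ => rfl, ?_⟩
      rintro v (hv | hv)
      · exact Or.inl (inl_injective hv).symm
      · exact Or.inr (inl_injective hv).symm
    | inr j =>
      obtain ⟨z, hz, hfe2, hcopy2⟩ := reduce_one hfe hcopy (fun hc => nomatch hc)
      refine ⟨k₁, z, _, hfe2, hcopy2, ?_, ?_⟩
      · intro v h0 h1
        have hvz : (inl v : V ⊕ Fin t) ≠ inl z :=
          fun hc => not_iso0_repl_tilde h0 h1 r s (inl k₁) (inr j) (hc ▸ hz)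
        show σ (Equiv.swap (inr j) (inl z) (inl v)) = σ (inl v)
        rw [Equiv.swap_apply_of_ne_of_ne Sum.inl_ne_inr hvz]
      · rintro v (hv | hv)
        · exact Or.inl (inl_injective hv).symm
        · exact absurd hv (fun hc => nomatch hc)
  | inr j' =>
    cases l with
    | inl l₁ =>
      have hfe' := isFeasible_comm hfe
      rw [replaceG_comm] at hcopy
      obtain ⟨z, hz, hfe2, hcopy2⟩ := reduce_one hfe' hcopy (fun hc => nomatch hc)
      refine ⟨l₁, z, _, hfe2, hcopy2, ?_, ?_⟩
      · intro v h0 h1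
        have hvz : (inl v : V ⊕ Fin t) ≠ inl z :=
          fun hc => not_iso0_repl_tilde h0 h1 r s (inl l₁) (inr j') (hc ▸ hz)
        show σ (Equiv.swap (inr j') (inl z) (inl v)) = σ (inl v)
        rw [Equiv.swap_apply_of_ne_of_ne Sum.inl_ne_inr hvz]
      · rintro v (hv | hv)
        · exact absurd hv (fun hc => nomatch hc)
        · exact Or.inl (inl_injective hv).symm
    | inr j =>
      obtain ⟨z, hz, hfe2, hcopy2⟩ := reduce_one hfe hcopy hkl
      have hfe2' := isFeasible_comm hfe2
      rw [replaceG_comm] at hcopy2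
      obtain ⟨z', hz', hfe3, hcopy3⟩ := reduce_one hfe2' hcopy2 (fun hc => nomatch hc)
      refine ⟨z, z', _, hfe3, hcopy3, ?_, ?_⟩
      · intro v h0 h1
        have hvz' : (inl v : V ⊕ Fin t) ≠ inl z' :=
          fun hc => not_iso0_repl_tilde h0 h1 r s (inl z) (inr j') (hc ▸ hz')
        have hvz : (inl v : V ⊕ Fin t) ≠ inl z :=
          fun hc => not_iso0_repl_tilde h0 h1 r s (inr j') (inr j) (hc ▸ hz)
        show σ (Equiv.swap (inr j) (inl z)
            ((Equiv.swap (inr j') (inl z')) (inl v))) = σ (inl v)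
        rw [Equiv.swap_apply_of_ne_of_ne Sum.inl_ne_inr hvz',
          Equiv.swap_apply_of_ne_of_ne Sum.inl_ne_inr hvz]
      · rintro v (hv | hv)
        · exact absurd hv (fun hc => nomatch hc)
        · exact absurd hv (fun hc => nomatch hc)

end Am

namespace Am

open Sum Equiv

variable {α : Type*} {V : Type*}

lemma preserve_closure [Fintype α] {S : Set (Equiv.Perm α)} {Z : Set α}
    (hS : ∀ σ ∈ S, ∀ a ∈ Z, σ a ∈ Z) :
    ∀ σ ∈ Subgroup.closure S, ∀ a ∈ Z, σ a ∈ Z := by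
  have hinv : ∀ σ : Equiv.Perm α, (∀ a ∈ Z, σ a ∈ Z) → ∀ a ∈ Z, σ.symm a ∈ Z := by
    intro σ hσ a ha
    have hsub : σ '' Z ⊆ Z := by
      rintro _ ⟨b, hb, rfl⟩
      exact hσ b hb
    have heq : σ '' Z = Z :=
      Set.eq_of_subset_of_ncard_le hsub
        (le_of_eq (Set.ncard_image_of_injective Z σ.injective).symm) Z.toFinite
    rw [← heq] at ha
    obtain ⟨b, hb, hba⟩ := ha
    rw [← hba, Equiv.symm_apply_apply]
    exact hb
  intro σ hσ
  induction hσ using Subgroup.closure_induction with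
  | mem x hx => exact hS x hx
  | one => intro a ha; exact ha
  | mul x y _ _ hx hy =>
    intro a ha
    exact hx _ (hy a ha)
  | inv x _ hx => exact hinv x hx

lemma top_of_swaps [Fintype α] [DecidableEq α] {Γ : Subgroup (Equiv.Perm α)}
    (h : ∀ a b : α, a ≠ b → Equiv.swap a b ∈ Γ) : Γ = ⊤ := by
  rw [eq_top_iff, ← Equiv.Perm.closure_isSwap, Subgroup.closure_le]
  rintro σ ⟨a, b, hab, rfl⟩
  exact h a b hab

/-- a realized-replacement witness that amounts to a strict contradiction with an
invariant set. -/
lemma no_invariant {G : SimpleGraph V} [Fintype V] {t : ℕ}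
    (hloc : LocalAmoeba (addIsolated G t)) {Z : Set (V ⊕ Fin t)}
    (hZ : ∀ σ ∈ feasiblePerms (addIsolated G t), ∀ a ∈ Z, σ a ∈ Z)
    {a b : V ⊕ Fin t} (ha : a ∈ Z) (hb : b ∉ Z) : False := by
  classical
  have hab : a ≠ b := fun hc => hb (hc ▸ ha)
  have hmem : Equiv.swap a b ∈ ampGroup (addIsolated G t) := by
    rw [hloc]
    trivial
  have := preserve_closure hZ _ hmem a ha
  rw [Equiv.swap_apply_left] at this
  exact hb this
end Am

namespace Am

open Sum Equiv

variable {V : Type*}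

/-- the extension homomorphism -/
def ext (V : Type*) (t : ℕ) : Equiv.Perm V →* Equiv.Perm (V ⊕ Fin t) :=
  (Equiv.Perm.sumCongrHom V (Fin t)).comp (MonoidHom.inl (Equiv.Perm V) (Equiv.Perm (Fin t)))

lemma ext_apply_inl {t : ℕ} (σ : Equiv.Perm V) (a : V) :
    (ext V t σ) (inl a) = inl (σ a) := rfl

lemma ext_apply_inr {t : ℕ} (σ : Equiv.Perm V) (j : Fin t) :
    (ext V t σ) (inr j) = inr j := rfl

lemma not_adj_repl_allinl_inr {G : SimpleGraph V} {t : ℕ} {r s k l : V} {j : Fin t}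
    {x : V ⊕ Fin t} :
    ¬ (replaceG (addIsolated G t) (inl r) (inl s) (inl k) (inl l)).Adj x (inr j) :=
  fun h => iso0_repl_inr _ h.symm

lemma ext_feasible {G : SimpleGraph V} {t : ℕ} {σ : Equiv.Perm V}
    (hσ : σ ∈ feasiblePerms G) : ext V t σ ∈ feasiblePerms (addIsolated G t) := by
  obtain ⟨r, s, k, l, hfe, hcopy⟩ := hσ
  have hcopy2 : copyG (addIsolated G t) (ext V t σ) =
      replaceG (addIsolated G t) (inl r) (inl s) (inl k) (inl l) := by
    ext a b
    rw [copy_adj]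
    cases a with
    | inl a =>
      cases b with
      | inl b =>
        rw [ext_apply_inl, ext_apply_inl, adj_inl, adj_repl_inl_iff]
        have : G.Adj (σ a) (σ b) ↔ (copyG G σ).Adj a b := Iff.rfl
        rw [this, hcopy]
      | inr j =>
        rw [ext_apply_inl, ext_apply_inr]
        exact iff_of_false (not_adj_inr _) not_adj_repl_allinl_inr
    | inr j =>
      rw [ext_apply_inr]
      exact iff_of_false (not_adj_inr' _)
        (fun h => not_adj_repl_allinl_inr (x := b) h.symm)
  refine ⟨inl r, inl s, inl k, inl l, ⟨adj_inl.2 hfe.1, ?_, iso_of_copy hcopy2⟩, hcopy2⟩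
  rcases hfe.2.1 with h | h
  · left
    rw [SimpleGraph.compl_adj] at h ⊢
    exact ⟨fun hc => h.1 (inl_injective hc), fun hc => h.2 (adj_inl.1 hc)⟩
  · right
    exact sym2_inl.2 h

lemma ext_mem_ampGroup {G : SimpleGraph V} {t : ℕ} {σ : Equiv.Perm V}
    (hσ : σ ∈ ampGroup G) : ext V t σ ∈ ampGroup (addIsolated G t) := by
  have hle : ampGroup G ≤ (ampGroup (addIsolated G t)).comap (ext V t) := by
    rw [ampGroup, Subgroup.closure_le]
    intro τ hτ
    exact Subgroup.subset_closure (ext_feasible hτ)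
  exact hle hσ

lemma replaceG_self' {α : Type*} {G : SimpleGraph α} {a b : α} (h : G.Adj a b) :
    replaceG G a b b a = G := by
  rw [replaceG_comm]
  exact replaceG_self h

lemma pendant_swap_mem [Fintype V] [DecidableEq V] {G : SimpleGraph V} {t : ℕ}
    {v n : V} (hn : G.Adj v n) (hu : ∀ c, G.Adj v c → c = n) (j : Fin t) :
    Equiv.swap (inl v) (inr j) ∈ feasiblePerms (addIsolated G t) := by
  set H₀ := replaceG (addIsolated G t) (inl v) (inl n) (inl n) (inr j) with hH₀
  have hvn : v ≠ n := hn.ne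
  have hz : Iso0 H₀ (inl v) := by
    intro c hc
    rw [hH₀, repl_adj] at hc
    rcases hc with ⟨h1, h2⟩ | ⟨h1, h2⟩
    · cases c with
      | inl c =>
        have := hu c (adj_inl.1 h1)
        subst this
        exact h2 rfl
      | inr i => exact not_adj_inr _ h1
    · rw [Sym2.eq_iff] at h1
      rcases h1 with ⟨h3, _⟩ | ⟨h3, _⟩
      · exact hvn (inl_injective h3)
      · exact nomatch h3
  have hswap : copyG H₀ (Equiv.swap (inr j) (inl v)) = addIsolated G t := by
    have := copy_swap (X := addIsolated G t) (r := inl v) (s := inl n) (k := inl n)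
      (u := (inr j : V ⊕ Fin t)) (z := inl v)
      (iso0_inr j) hz (fun hc => nomatch hc)
      (fun hc => hvn (inl_injective hc)) (fun hc => nomatch hc)
    rw [← hH₀] at this
    rw [this]
    exact replaceG_self' (adj_inl.2 hn)
  have hcopy : copyG (addIsolated G t) (Equiv.swap (inl v) (inr j)) = H₀ := by
    have h2 : copyG (copyG H₀ (Equiv.swap (inr j) (inl v))) (Equiv.swap (inr j) (inl v))
        = H₀ := by
      rw [copy_copy, Equiv.swap_swap]
      rfl
    rw [hswap] at h2
    rw [Equiv.swap_comm]
    exact h2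
  refine ⟨inl v, inl n, inl n, inr j, ⟨adj_inl.2 hn, ?_, iso_of_copy hcopy⟩, hcopy⟩
  left
  rw [SimpleGraph.compl_adj]
  exact ⟨fun hc => (nomatch hc), not_adj_inr _⟩

/-- the forward direction: the degree-one orbit condition implies `G ∪ tK₁` is a
local amoeba for every `t ≥ 1`. -/
lemma cond_implies_local [Fintype V] {G : SimpleGraph V} (hne : G ≠ ⊥)
    (hc : ∀ x : V, ∃ σ ∈ ampGroup G, Deg1 G (σ x)) (t : ℕ) (ht : 1 ≤ t) :
    LocalAmoeba (addIsolated G t) := by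
  classical
  have hswapmem : ∀ (x : V) (j : Fin t),
      Equiv.swap (inl x) (inr j) ∈ ampGroup (addIsolated G t) := by
    intro x j
    obtain ⟨σ, hσ, n, hn, hu⟩ := hc x
    have h1 : Equiv.swap (inl (σ x)) (inr j) ∈ ampGroup (addIsolated G t) :=
      Subgroup.subset_closure (pendant_swap_mem hn hu j)
    have h2 := ext_mem_ampGroup (G := G) (t := t) (Subgroup.inv_mem _ hσ)
    have key : Equiv.swap (inl x) ((inr j : V ⊕ Fin t)) =
        (ext V t σ⁻¹) * Equiv.swap (inl (σ x)) (inr j) * (ext V t σ⁻¹)⁻¹ := by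
      have h3 := Equiv.swap_apply_apply (ext V t σ⁻¹) (inl (σ x)) (inr j)
      rw [ext_apply_inl, ext_apply_inr, Equiv.Perm.inv_def, Equiv.symm_apply_apply] at h3
      exact h3
    rw [key]
    exact Subgroup.mul_mem _ (Subgroup.mul_mem _ h2 h1) (Subgroup.inv_mem _ h2)
  obtain ⟨x₀, y₀, _⟩ := exists_edge hne
  set j₀ : Fin t := ⟨0, ht⟩ with hj₀
  apply top_of_swaps
  intro a b hab
  cases a with
  | inl x =>
    cases b with
    | inl y =>
      have hxy : x ≠ y := fun hc => hab (congrArg inl hc)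
      set f : Equiv.Perm (V ⊕ Fin t) := Equiv.swap (inl y) (inr j₀) with hf
      have key : Equiv.swap ((inl x : V ⊕ Fin t)) (inl y) =
          f * Equiv.swap (inl x) (inr j₀) * f⁻¹ := by
        have h3 := Equiv.swap_apply_apply f (inl x) (inr j₀)
        rw [hf] at h3
        rw [Equiv.swap_apply_of_ne_of_ne (fun hc => hxy (inl_injective hc))
          Sum.inl_ne_inr, Equiv.swap_apply_right] at h3
        rw [hf]
        exact h3
      rw [key]
      exact Subgroup.mul_mem _ (Subgroup.mul_mem _ (hswapmem y j₀) (hswapmem x j₀))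
        (Subgroup.inv_mem _ (hswapmem y j₀))
    | inr j => exact hswapmem x j
  | inr i =>
    cases b with
    | inl y =>
      rw [Equiv.swap_comm]
      exact hswapmem y i
    | inr j =>
      have hij : i ≠ j := fun hc => hab (congrArg inr hc)
      set f : Equiv.Perm (V ⊕ Fin t) := Equiv.swap (inr j) (inl x₀) with hf
      have key : Equiv.swap ((inr i : V ⊕ Fin t)) (inr j) =
          f * Equiv.swap (inr i) (inl x₀) * f⁻¹ := by
        have h3 := Equiv.swap_apply_apply f (inr i) (inl x₀)
        rw [hf] at h3
        rw [Equiv.swap_apply_of_ne_of_ne (fun hc => hij (inr_injective hc))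
          Sum.inr_ne_inl, Equiv.swap_apply_right] at h3
        rw [hf]
        exact h3
      have hfmem : f ∈ ampGroup (addIsolated G t) := by
        rw [hf, Equiv.swap_comm]
        exact hswapmem x₀ j
      have hmid : Equiv.swap ((inr i : V ⊕ Fin t)) (inl x₀) ∈ ampGroup (addIsolated G t) := by
        rw [Equiv.swap_comm]
        exact hswapmem x₀ i
      rw [key]
      exact Subgroup.mul_mem _ (Subgroup.mul_mem _ hfmem hmid) (Subgroup.inv_mem _ hfmem)

end Am

namespace Am

open Sum Equiv

variable {α : Type*} {V : Type*}

lemma iso0_repl_of {X : SimpleGraph α} {r s k l a : α} (ha : Iso0 X a)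
    (hak : a ≠ k) (hal : a ≠ l) : Iso0 (replaceG X r s k l) a := by
  intro c hc
  rw [repl_adj] at hc
  rcases hc with ⟨h1, _⟩ | ⟨h1, _⟩
  · exact ha c h1
  · rw [Sym2.eq_iff] at h1
    rcases h1 with ⟨h2, _⟩ | ⟨h2, _⟩
    · exact hak h2
    · exact hal h2

lemma newedge_deg1 {X : SimpleGraph α} {r s k l : α} (hk : Iso0 X k) (hkl : k ≠ l) :
    Deg1 (replaceG X r s k l) k := by
  refine ⟨l, repl_adj.2 (Or.inr ⟨rfl, hkl⟩), ?_⟩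
  intro c hc
  rw [repl_adj] at hc
  rcases hc with ⟨h1, _⟩ | ⟨h1, _⟩
  · exact absurd h1 (hk c)
  · rw [Sym2.eq_iff] at h1
    rcases h1 with ⟨_, h2⟩ | ⟨h2, _⟩
    · exact h2
    · exact absurd h2 hkl

lemma deg1_inl {G : SimpleGraph V} {t : ℕ} {m : V} :
    Deg1 (addIsolated G t) (inl m) ↔ Deg1 G m := by
  constructor
  · rintro ⟨b, hb, hu⟩
    cases b with
    | inl b =>
      refine ⟨b, adj_inl.1 hb, fun c hc => ?_⟩
      have := hu (inl c) (adj_inl.2 hc)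
      exact inl_injective this
    | inr j => exact absurd hb (not_adj_inr _)
  · rintro ⟨b, hb, hu⟩
    refine ⟨inl b, adj_inl.2 hb, fun c hc => ?_⟩
    cases c with
    | inl c => exact congrArg inl (hu c (adj_inl.1 hc))
    | inr j => exact absurd hc (not_adj_inr _)

lemma not_deg1_inr {G : SimpleGraph V} {t : ℕ} {j : Fin t} :
    ¬ Deg1 (addIsolated G t) (inr j) := by
  rintro ⟨b, hb, _⟩
  exact not_adj_inr' _ hb

lemma deg1_sigma_inl {G : SimpleGraph V} {t : ℕ} {σ : Equiv.Perm (V ⊕ Fin t)}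
    {a : V ⊕ Fin t} (h : Deg1 (addIsolated G t) (σ a)) : ∃ m : V, σ a = inl m ∧ Deg1 G m := by
  cases hm : σ a with
  | inl m => exact ⟨m, rfl, deg1_inl.1 (hm ▸ h)⟩
  | inr j => exact absurd (hm ▸ h) not_deg1_inr

lemma deg1_not_iso0 {X : SimpleGraph α} {a : α} (h : Deg1 X a) : ¬ Iso0 X a := by
  obtain ⟨b, hb, _⟩ := h
  exact fun hc => hc b hb

/-- A feasible replacement of `G` whose new edge has an isolated endpoint produces a
permutation in the feasible set sending that endpoint to a degree-one vertex. -/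
lemma feasible_iso_end_deg1 {G : SimpleGraph V} {r s k l : V}
    (hfe : IsFeasible G r s k l) (hk : Iso0 G k) :
    ∃ χ ∈ feasiblePerms G, Deg1 G (χ k) := by
  have hkl : k ≠ l := by
    rcases hfe.2.1 with h | h
    · rw [SimpleGraph.compl_adj] at h
      exact h.1
    · rw [Sym2.eq_iff] at h
      exfalso
      rcases h with ⟨h1, _⟩ | ⟨h1, _⟩
      · exact hk s (h1 ▸ hfe.1)
      · exact hk r (h1 ▸ hfe.1.symm)
  obtain ⟨e⟩ := hfe.2.2
  obtain ⟨hmem, hcopy⟩ := mem_feasible_of_iso hfe e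
  refine ⟨e, hmem, ?_⟩
  exact (deg1_transport hcopy).1 (newedge_deg1 hk hkl)

/-- If `G ∪ tK₁` is a local amoeba with `t ≥ 1` and `G` has an edge,
then `G` has a vertex of degree one. -/
lemma exists_deg1 [Fintype V] {G : SimpleGraph V} (hne : G ≠ ⊥) {t : ℕ} (ht : 1 ≤ t)
    (hloc : LocalAmoeba (addIsolated G t)) : ∃ d : V, Deg1 G d := by
  classical
  by_contra hd
  push_neg at hd
  set Z : Set (V ⊕ Fin t) := {w | Iso0 (addIsolated G t) w} with hZdef
  have hZ : ∀ σ ∈ feasiblePerms (addIsolated G t), ∀ a ∈ Z, σ a ∈ Z := by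
    rintro σ ⟨r', s', k, l, hfe, hcopy⟩ a ha
    obtain ⟨r, s, rfl, rfl⟩ := adj_ends_inl hfe.1
    have hkl := feasible_ne hfe
    have hank : a ≠ k := by
      rintro rfl
      have h1 : Deg1 (replaceG (addIsolated G t) (inl r) (inl s) a l) a :=
        newedge_deg1 ha hkl
      have h2 := (deg1_transport hcopy).1 h1
      obtain ⟨m, _, hm⟩ := deg1_sigma_inl h2
      exact hd m hm
    have hanl : a ≠ l := by
      rintro rfl
      rw [replaceG_comm] at hcopy
      have h1 : Deg1 (replaceG (addIsolated G t) (inl r) (inl s) a k) a :=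
        newedge_deg1 ha (Ne.symm hkl)
      have h2 := (deg1_transport hcopy).1 h1
      obtain ⟨m, _, hm⟩ := deg1_sigma_inl h2
      exact hd m hm
    have h3 : Iso0 (replaceG (addIsolated G t) (inl r) (inl s) k l) a :=
      iso0_repl_of ha hank hanl
    exact (iso0_transport hcopy).1 h3
  obtain ⟨x₀, y₀, hxy⟩ := exists_edge hne
  refine no_invariant hloc hZ (a := inr ⟨0, ht⟩) (b := inl x₀) (iso0_inr _) ?_
  intro hc
  exact (hc : Iso0 _ _) (inl y₀) (adj_inl.2 hxy)
end Am

namespace Am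

open Sum Equiv

variable {V : Type*}

lemma typeII_iso_contra [Fintype V] [DecidableEq V] {G : SimpleGraph V} {t : ℕ}
    {σ : Equiv.Perm (V ⊕ Fin t)} {r s : V} {k : V ⊕ Fin t} {j : Fin t} {w₀ : V}
    (hfe : IsFeasible (addIsolated G t) (inl r) (inl s) k (inr j))
    (hcopy : copyG (addIsolated G t) σ =
      replaceG (addIsolated G t) (inl r) (inl s) k (inr j))
    (hw₀ : Iso0 G w₀)
    (hw₀H : Iso0 (replaceG (addIsolated G t) (inl r) (inl s) k (inr j)) (inl w₀))
    (hnok : ∀ r' s' k' l' : V, IsFeasible G r' s' k' l' → ¬ Iso0 G k') : False := by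
  have hkj : k ≠ inr j := feasible_ne hfe
  obtain ⟨hfe3, hcopy3⟩ := reduce_with hfe hcopy hw₀H hkj
  cases k with
  | inl k₁ =>
    obtain ⟨φ, _, hφfe, _, _⟩ := patch hfe3 hcopy3
    exact hnok r s w₀ k₁ (isFeasible_comm hφfe) hw₀
  | inr j'' =>
    have hfe3' := isFeasible_comm hfe3
    rw [replaceG_comm] at hcopy3
    obtain ⟨z₂, hz₂, hfe4, hcopy4⟩ := reduce_one hfe3' hcopy3 (fun hc => nomatch hc)
    obtain ⟨φ, _, hφfe, _, _⟩ := patch hfe4 hcopy4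
    exact hnok r s w₀ z₂ hφfe hw₀

/-- Main lemma: if `G ∪ tK₁` is a local amoeba for some `t ≥ 1` then every vertex can
be moved by `S_G` to a vertex of degree one. -/
lemma local_implies_cond [Fintype V] {G : SimpleGraph V} (hne : G ≠ ⊥) {t : ℕ}
    (ht : 1 ≤ t) (hloc : LocalAmoeba (addIsolated G t)) :
    ∀ x : V, ∃ σ ∈ ampGroup G, Deg1 G (σ x) := by
  classical
  intro x
  by_contra hC
  push_neg at hC
  set A : Set V := {v | ∃ φ ∈ ampGroup G, φ x = v} with hAdef
  have hxA : x ∈ A := ⟨1, Subgroup.one_mem _, rfl⟩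
  have hAclosed : ∀ φ ∈ ampGroup G, ∀ v ∈ A, φ v ∈ A := by
    rintro φ hφ v ⟨ψ, hψ, rfl⟩
    exact ⟨φ * ψ, Subgroup.mul_mem _ hφ hψ, rfl⟩
  have hAfeas : ∀ φ ∈ feasiblePerms G, ∀ v ∈ A, φ v ∈ A := fun φ hφ =>
    hAclosed φ (Subgroup.subset_closure hφ)
  have hAD1 : ∀ v ∈ A, ¬ Deg1 G v := by
    rintro v ⟨ψ, hψ, rfl⟩
    exact hC ψ hψ
  by_cases hI : ∃ w ∈ A, Iso0 G w
  · -- A contains an isolated vertex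
    obtain ⟨w₀, hw₀A, hw₀⟩ := hI
    obtain ⟨d, hd⟩ := exists_deg1 hne ht hloc
    have hIA : ∀ v, Iso0 G v → v ∈ A := by
      intro v hv
      have h2 := hAfeas _ (swap_isolated_mem hne hw₀ hv) w₀ hw₀A
      rwa [Equiv.swap_apply_left] at h2
    have hnok : ∀ r s k l : V, IsFeasible G r s k l → ¬ Iso0 G k := by
      intro r s k l hfe hk
      obtain ⟨χ, hχ, hd1⟩ := feasible_iso_end_deg1 hfe hk
      exact hAD1 _ (hAfeas χ hχ k (hIA k hk)) hd1
    set Z : Set (V ⊕ Fin t) := (inl '' A) ∪ {w | Iso0 (addIsolated G t) w} with hZ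
    have hZinv : ∀ σ ∈ feasiblePerms (addIsolated G t), ∀ a ∈ Z, σ a ∈ Z := by
      rintro σ ⟨r', s', k, l, hfe, hcopy⟩ a ha
      obtain ⟨r, s, rfl, rfl⟩ := adj_ends_inl hfe.1
      obtain ⟨k₀, l₀, ρ, hfe2, hcopy2, hagree, hkeep⟩ := normalize hfe hcopy
      obtain ⟨φ, hφfeas, hφfe, hφcopy, hφagree⟩ := patch hfe2 hcopy2
      have hk₀ : ¬ Iso0 G k₀ := hnok _ _ _ _ hφfe
      have hl₀ : ¬ Iso0 G l₀ := hnok _ _ _ _ (isFeasible_comm hφfe)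
      have hw₀end : (inl w₀ : V ⊕ Fin t) ≠ k ∧ (inl w₀ : V ⊕ Fin t) ≠ l := by
        constructor
        · intro hc
          rcases hkeep w₀ (Or.inl hc) with h | h
          · exact hk₀ (h ▸ hw₀)
          · exact hl₀ (h ▸ hw₀)
        · intro hc
          rcases hkeep w₀ (Or.inr hc) with h | h
          · exact hk₀ (h ▸ hw₀)
          · exact hl₀ (h ▸ hw₀)
      have hisopath : ∀ b, Iso0 (addIsolated G t) b → σ b ∈ Z := by
        intro b hb
        have hbend : b ≠ k ∧ b ≠ l := by
          cases b with
          | inl v =>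
            have hv := iso0_inl.1 hb
            constructor
            · intro hc
              rcases hkeep v (Or.inl hc) with h | h
              · exact hk₀ (h ▸ hv)
              · exact hl₀ (h ▸ hv)
            · intro hc
              rcases hkeep v (Or.inr hc) with h | h
              · exact hk₀ (h ▸ hv)
              · exact hl₀ (h ▸ hv)
          | inr j =>
            constructor
            · rintro rfl
              have hfe' := isFeasible_comm hfe
              rw [replaceG_comm] at hcopy
              exact (typeII_iso_contra hfe' hcopy hw₀
                (iso0_repl_of (iso0_inl.2 hw₀) hw₀end.2 hw₀end.1) hnok).elim
            · rintro rfl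
              exact (typeII_iso_contra hfe hcopy hw₀
                (iso0_repl_of (iso0_inl.2 hw₀) hw₀end.1 hw₀end.2) hnok).elim
        have h3 : Iso0 (replaceG (addIsolated G t) (inl r) (inl s) k l) b :=
          iso0_repl_of hb hbend.1 hbend.2
        exact Or.inr ((iso0_transport hcopy).1 h3)
      rcases ha with ⟨v, hvA, rfl⟩ | hiso
      · by_cases hvI : Iso0 G v
        · exact hisopath _ (iso0_inl.2 hvI)
        · have hvD : ¬ Deg1 G v := hAD1 v hvA
          have h1 : σ (inl v) = inl (φ v) := by
            rw [← hagree v hvI hvD]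
            exact hφagree v (not_iso0_repl hvI hvD r s k₀ l₀)
          rw [h1]
          exact Or.inl ⟨φ v, hAfeas φ hφfeas v hvA, rfl⟩
      · exact hisopath a hiso
    refine no_invariant hloc hZinv (a := inl x) (b := inl d) (Or.inl ⟨x, hxA, rfl⟩) ?_
    rintro (⟨v, hvA, hv⟩ | hiso)
    · exact hAD1 d (inl_injective hv ▸ hvA) hd
    · exact deg1_not_iso0 hd (iso0_inl.1 hiso)
  · -- A contains no isolated vertex
    push_neg at hI
    set Z : Set (V ⊕ Fin t) := inl '' A with hZ
    have hZinv : ∀ σ ∈ feasiblePerms (addIsolated G t), ∀ a ∈ Z, σ a ∈ Z := by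
      rintro σ ⟨r', s', k, l, hfe, hcopy⟩ a ⟨v, hvA, rfl⟩
      obtain ⟨r, s, rfl, rfl⟩ := adj_ends_inl hfe.1
      obtain ⟨k₀, l₀, ρ, hfe2, hcopy2, hagree, hkeep⟩ := normalize hfe hcopy
      obtain ⟨φ, hφfeas, hφfe, hφcopy, hφagree⟩ := patch hfe2 hcopy2
      have hvI : ¬ Iso0 G v := hI v hvA
      have hvD : ¬ Deg1 G v := hAD1 v hvA
      have h1 : σ (inl v) = inl (φ v) := by
        rw [← hagree v hvI hvD]
        exact hφagree v (not_iso0_repl hvI hvD r s k₀ l₀)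
      rw [h1]
      exact ⟨φ v, hAfeas φ hφfeas v hvA, rfl⟩
    refine no_invariant hloc hZinv (a := inl x) (b := inr ⟨0, ht⟩) ⟨x, hxA, rfl⟩ ?_
    rintro ⟨v, _, hv⟩
    exact nomatch hv

end Am

theorem stmt12 {V : Type*} [Fintype V] (G : SimpleGraph V) [DecidableRel G.Adj]
    (hne : G ≠ ⊥) :
    (GlobalAmoeba G ↔ ∀ x : V, ∃ σ ∈ ampGroup G, G.degree (σ x) = 1) ∧
    (GlobalAmoeba G ↔ LocalAmoeba (addIsolated G 1)) := by
  classical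
  have cond_iff : (∀ x : V, ∃ σ ∈ ampGroup G, G.degree (σ x) = 1) ↔
      (∀ x : V, ∃ σ ∈ ampGroup G, Am.Deg1 G (σ x)) := by
    refine forall_congr' fun x => exists_congr fun σ => and_congr_right fun _ => ?_
    exact Am.deg1_iff_degree.symm
  have fwd : GlobalAmoeba G → ∀ x : V, ∃ σ ∈ ampGroup G, Am.Deg1 G (σ x) := by
    rintro ⟨T, hT⟩
    exact Am.local_implies_cond hne (le_max_right T 1) (hT (max T 1) (le_max_left T 1))
  have bwd : (∀ x : V, ∃ σ ∈ ampGroup G, Am.Deg1 G (σ x)) → GlobalAmoeba G := by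
    intro h
    exact ⟨1, fun t ht => Am.cond_implies_local hne h t ht⟩
  refine ⟨⟨fun h => cond_iff.2 (fwd h), fun h => bwd (cond_iff.1 h)⟩, ?_⟩
  constructor
  · intro h
    exact Am.cond_implies_local hne (fwd h) 1 le_rfl
  · intro h
    exact bwd (Am.local_implies_cond hne le_rfl h)
end

section
/- For every connected graph G there exists a global amoeba H having a connected component isomorphic to G. -/
set_option linter.unusedSectionVars false
set_option linter.unusedVariables false


open SimpleGraph Equiv

namespace Stmt17Aux

open Sum

/-! ### generic lemmas -/

@[simp]
lemma addIsolated_adj_inl_inl {W : Type*} (H : SimpleGraph W) (t : ℕ) (a b : W) :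
    (addIsolated H t).Adj (inl a) (inl b) ↔ H.Adj a b := by
  simp [addIsolated, sumGraph, map_adj']
  exact fun h => h.ne

@[simp]
lemma addIsolated_not_adj_inr_right {W : Type*} (H : SimpleGraph W) (t : ℕ) (x : W ⊕ Fin t)
    (j : Fin t) : ¬ (addIsolated H t).Adj x (inr j) := by
  simp [addIsolated, sumGraph, map_adj']

@[simp]
lemma addIsolated_not_adj_inr_left {W : Type*} (H : SimpleGraph W) (t : ℕ) (x : W ⊕ Fin t)
    (j : Fin t) : ¬ (addIsolated H t).Adj (inr j) x := by
  simp [addIsolated, sumGraph, map_adj']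

lemma replaceG_self {α : Type*} {Γ : SimpleGraph α} {r s : α} (h : Γ.Adj r s) :
    replaceG Γ r s r s = Γ := by
  unfold replaceG
  rw [Set.diff_union_self, Set.union_eq_self_of_subset_right (by simpa using h),
    fromEdgeSet_edgeSet]

lemma replaceG_adj {α : Type*} (Γ : SimpleGraph α) (r s k l a b : α) :
    (replaceG Γ r s k l).Adj a b ↔
      ((Γ.Adj a b ∧ s(a, b) ≠ s(r, s)) ∨ s(a, b) = s(k, l)) ∧ a ≠ b := by
  show (SimpleGraph.fromEdgeSet _).Adj a b ↔ _
  rw [fromEdgeSet_adj]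
  simp only [Set.mem_union, Set.mem_diff, Set.mem_singleton_iff, mem_edgeSet]

/-- If `copyG Γ σ = R` then `R ≃g Γ`. -/
def copyIso {α : Type*} {Γ R : SimpleGraph α} {σ : Equiv.Perm α} (h : copyG Γ σ = R) : R ≃g Γ :=
  h ▸ (⟨σ, Iff.rfl⟩ : copyG Γ σ ≃g Γ)

lemma mem_feasible_of_copy {α : Type*} {Γ : SimpleGraph α} (σ : Equiv.Perm α) (r s k l : α)
    (h1 : Γ.Adj r s) (h2 : Γᶜ.Adj k l ∨ s(k, l) = s(r, s))
    (h3 : copyG Γ σ = replaceG Γ r s k l) : σ ∈ feasiblePerms Γ :=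
  ⟨r, s, k, l, ⟨h1, h2, ⟨copyIso h3⟩⟩, h3⟩

/-! ### the construction -/

variable {V : Type} [Fintype V] (G : SimpleGraph V)

/-- number of edges -/
noncomputable def numE : ℕ := Nat.card G.edgeSet

/-- enumeration of the edges -/
noncomputable def edgeAt (p : Fin (numE G)) : Sym2 V :=
  ((Finite.equivFinOfCardEq (rfl : Nat.card G.edgeSet = numE G)).symm p : G.edgeSet)

lemma edgeAt_mem (p : Fin (numE G)) : edgeAt G p ∈ G.edgeSet :=
  ((Finite.equivFinOfCardEq rfl).symm p).2

lemma edgeAt_inj {p q : Fin (numE G)} (h : edgeAt G p = edgeAt G q) : p = q := by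
  unfold edgeAt at h
  have := (Finite.equivFinOfCardEq (rfl : Nat.card G.edgeSet = numE G)).symm.injective
    (Subtype.ext h)
  exact this

lemma edgeAt_surj {e : Sym2 V} (he : e ∈ G.edgeSet) : ∃ p, edgeAt G p = e :=
  ⟨Finite.equivFinOfCardEq rfl ⟨e, he⟩, by unfold edgeAt; exact congrArg Subtype.val (Equiv.symm_apply_apply _ _)⟩

/-- Vertex type of the host graph: `numE G + 1` parallel copies of `V` plus a `K₂` gadget. -/
abbrev BigV : Type := (V × Fin (numE G + 1)) ⊕ Fin 2

/-- adjacency of the host graph -/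
def bigAdj : BigV G → BigV G → Prop
  | inl (a, i), inl (b, j) =>
      i = j ∧ ∃ p : Fin (numE G), (p : ℕ) < (i : ℕ) ∧ edgeAt G p = s(a, b)
  | inr u, inr v => u ≠ v
  | _, _ => False

@[simp] lemma bigAdj_inl_inl (a b : V) (i j : Fin (numE G + 1)) :
    bigAdj G (inl (a, i)) (inl (b, j)) ↔
      i = j ∧ ∃ p : Fin (numE G), (p : ℕ) < (i : ℕ) ∧ edgeAt G p = s(a, b) := Iff.rfl

@[simp] lemma bigAdj_inr_inr (u v : Fin 2) : bigAdj G (inr u) (inr v) ↔ u ≠ v := Iff.rfl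

@[simp] lemma bigAdj_inl_inr (x : V × Fin (numE G + 1)) (v : Fin 2) :
    ¬ bigAdj G (inl x) (inr v) := fun h => by obtain ⟨a, i⟩ := x; exact h

@[simp] lemma bigAdj_inr_inl (x : V × Fin (numE G + 1)) (v : Fin 2) :
    ¬ bigAdj G (inr v) (inl x) := fun h => by obtain ⟨a, i⟩ := x; exact h

lemma edgeAt_ne {p : Fin (numE G)} {a b : V} (h : edgeAt G p = s(a, b)) : a ≠ b := by
  intro hab
  exact G.not_isDiag_of_mem_edgeSet (edgeAt_mem G p) (by rw [h, hab]; exact Sym2.mk_isDiag_iff.2 rfl)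

/-- The host graph. -/
def bigH : SimpleGraph (BigV G) where
  Adj := bigAdj G
  symm := by
    refine ⟨?_⟩
    rintro (⟨a, i⟩ | u) (⟨b, j⟩ | v) h
    · obtain ⟨rfl, p, hp, hpe⟩ := h
      exact ⟨rfl, p, hp, hpe.trans Sym2.eq_swap⟩
    · exact h.elim
    · exact h.elim
    · exact fun he => h he.symm
  loopless := by
    refine ⟨?_⟩
    rintro (⟨a, i⟩ | u) h
    · obtain ⟨-, p, -, hpe⟩ := h
      exact edgeAt_ne G hpe rfl
    · exact h rfl

@[simp] lemma bigH_adj (x y : BigV G) : (bigH G).Adj x y ↔ bigAdj G x y := Iff.rfl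

section Amoeba

variable [DecidableEq V] (t : ℕ)

abbrev W' : Type := BigV G ⊕ Fin t

noncomputable abbrev H' : SimpleGraph (W' G t) := addIsolated (bigH G) t

/-- isolated vertices -/
def Isol (x : W' G t) : Prop := ∀ y, ¬ (H' G t).Adj x y

lemma isol_inr (j : Fin t) : Isol G t (inr j) := fun _ => addIsolated_not_adj_inr_left _ _ _ _

lemma isol_zero (v : V) : Isol G t (inl (inl (v, 0))) := by
  rintro (x | j) h
  · rw [addIsolated_adj_inl_inl] at h
    rcases x with (⟨b, j⟩ | u)
    · obtain ⟨-, p, hp, -⟩ := h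
      simp at hp
    · exact bigAdj_inl_inr G (v, 0) u h
  · exact addIsolated_not_adj_inr_right _ _ _ _ h

lemma gadget_adj : (H' G t).Adj (inl (inr 0)) (inl (inr 1)) := by
  rw [addIsolated_adj_inl_inl]; exact (by decide : (0 : Fin 2) ≠ 1)

lemma swap_isol_mem {x y : W' G t} (hx : Isol G t x) (hy : Isol G t y) (hxy : x ≠ y) :
    Equiv.swap x y ∈ feasiblePerms (H' G t) := by
  have hadj := gadget_adj G t
  apply mem_feasible_of_copy _ _ _ _ _ hadj (Or.inr rfl)
  rw [replaceG_self hadj]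
  ext a b
  show (H' G t).Adj (Equiv.swap x y a) (Equiv.swap x y b) ↔ (H' G t).Adj a b
  have key : ∀ z, (Equiv.swap x y z = z) ∨ (Isol G t z ∧ Isol G t (Equiv.swap x y z)) := by
    intro z
    rcases eq_or_ne z x with rfl | hzx
    · exact Or.inr ⟨hx, by rw [Equiv.swap_apply_left]; exact hy⟩
    rcases eq_or_ne z y with rfl | hzy
    · exact Or.inr ⟨hy, by rw [Equiv.swap_apply_right]; exact hx⟩
    · exact Or.inl (Equiv.swap_apply_of_ne_of_ne hzx hzy)
  rcases key a with ha | ⟨ha1, ha2⟩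
  · rcases key b with hb | ⟨hb1, hb2⟩
    · rw [ha, hb]
    · rw [ha]
      constructor
      · intro h; exact absurd h.symm (hb2 _)
      · intro h; exact absurd h.symm (hb1 _)
  · constructor
    · intro h; exact absurd h (ha2 _)
    · intro h; exact absurd h (ha1 _)

/-- the permutation exchanging copies `p` and `p+1` wholesale -/
noncomputable def blockSwap (p : Fin (numE G)) : Equiv.Perm (W' G t) :=
  Equiv.sumCongr (Equiv.sumCongr (Equiv.prodCongr (Equiv.refl V)
    (Equiv.swap p.castSucc p.succ)) (Equiv.refl (Fin 2))) (Equiv.refl (Fin t))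

@[simp] lemma blockSwap_apply_v (p : Fin (numE G)) (v : V) (i : Fin (numE G + 1)) :
    blockSwap G t p (inl (inl (v, i))) = inl (inl (v, Equiv.swap p.castSucc p.succ i)) := rfl

@[simp] lemma blockSwap_apply_g (p : Fin (numE G)) (u : Fin 2) :
    blockSwap G t p (inl (inr u)) = inl (inr u) := rfl

@[simp] lemma blockSwap_apply_t (p : Fin (numE G)) (j : Fin t) :
    blockSwap G t p (inr j) = inr j := rfl

lemma exists_lt_succ_iff (p : Fin (numE G)) (X : Sym2 V) :
    (∃ q : Fin (numE G), (q : ℕ) < (p : ℕ) + 1 ∧ edgeAt G q = X) ↔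
      (∃ q : Fin (numE G), (q : ℕ) < (p : ℕ) ∧ edgeAt G q = X) ∨ edgeAt G p = X := by
  constructor
  · rintro ⟨q, hq, rfl⟩
    rcases lt_or_eq_of_le (Nat.lt_succ_iff.1 hq) with h | h
    · exact Or.inl ⟨q, h, rfl⟩
    · have : q = p := Fin.ext h
      subst this
      exact Or.inr rfl
  · rintro (⟨q, hq, rfl⟩ | rfl)
    · exact ⟨q, by omega, rfl⟩
    · exact ⟨p, by omega, rfl⟩

lemma blockSwap_mem (p : Fin (numE G)) : blockSwap G t p ∈ feasiblePerms (H' G t) := by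
  obtain ⟨u, w, he⟩ : ∃ u w, edgeAt G p = s(u, w) :=
    Sym2.inductionOn (f := fun z => ∃ u w, z = s(u, w)) (edgeAt G p) fun u w => ⟨u, w, rfl⟩
  have hne : u ≠ w := edgeAt_ne G he
  apply mem_feasible_of_copy (blockSwap G t p) (inl (inl (u, p.succ))) (inl (inl (w, p.succ)))
      (inl (inl (u, p.castSucc))) (inl (inl (w, p.castSucc)))
  · rw [addIsolated_adj_inl_inl]
    exact ⟨rfl, p, by simp, he⟩
  · left
    rw [SimpleGraph.compl_adj]
    refine ⟨?_, ?_⟩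
    · simp [hne]
    · intro h
      rw [addIsolated_adj_inl_inl] at h
      obtain ⟨-, q, hq, hqe⟩ := h
      have : q = p := edgeAt_inj G (hqe.trans he.symm)
      subst this
      simp at hq
  · ext a b
    show (H' G t).Adj (blockSwap G t p a) (blockSwap G t p b) ↔ _
    rw [replaceG_adj]
    rcases a with (⟨va, ia⟩ | ua) | ja <;> rcases b with (⟨vb, ib⟩ | ub) | jb <;>
      simp only [blockSwap_apply_v, blockSwap_apply_g, blockSwap_apply_t,
        addIsolated_adj_inl_inl, addIsolated_not_adj_inr_left, addIsolated_not_adj_inr_right,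
        bigH_adj, bigAdj_inl_inl, bigAdj_inr_inr, bigAdj_inl_inr, bigAdj_inr_inl,
        Sym2.eq_iff, Sum.inl.injEq, Sum.inr.injEq, Prod.mk.injEq, ne_eq, reduceCtorEq,
        false_and, and_false, false_or, or_false, or_self, not_false_eq_true, and_true,
        true_and, iff_false, false_iff, not_true, not_false_iff]
    case inl.inr.inl.inr => exact ⟨fun h => ⟨h, h⟩, fun h => h.1⟩
    rcases eq_or_ne ia ib with rfl | hii
    · have hcs : p.castSucc ≠ p.succ := (Fin.castSucc_lt_succ (i := p)).ne
      by_cases h1 : ia = p.castSucc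
      · subst h1
        simp only [Equiv.swap_apply_left, Fin.val_succ, Fin.coe_castSucc, and_true, true_and]
        constructor
        · rintro ⟨q, hq, hqe⟩
          have hvv : va ≠ vb := edgeAt_ne G hqe
          refine ⟨?_, hvv⟩
          rcases (exists_lt_succ_iff G p s(va, vb)).1 ⟨q, hq, hqe⟩ with h | h
          · refine Or.inl ⟨h, ?_⟩
            rintro (⟨⟨-, hx⟩, -⟩ | ⟨⟨-, hx⟩, -⟩) <;> exact hcs hx
          · rcases Sym2.eq_iff.1 (he.symm.trans h) with ⟨rfl, rfl⟩ | ⟨rfl, rfl⟩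
            · exact Or.inr (Or.inl ⟨rfl, rfl⟩)
            · exact Or.inr (Or.inr ⟨rfl, rfl⟩)
        · rintro ⟨h | h, hvv⟩
          · obtain ⟨⟨q, hq, hqe⟩, -⟩ := h
            exact ⟨q, by omega, hqe⟩
          · rcases h with ⟨rfl, rfl⟩ | ⟨rfl, rfl⟩
            · exact ⟨p, by omega, he⟩
            · exact ⟨p, by omega, he.trans Sym2.eq_swap⟩
      · by_cases h2 : ia = p.succ
        · subst h2
          simp only [Equiv.swap_apply_right, Fin.val_succ, Fin.coe_castSucc, and_true, true_and]
          constructor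
          · rintro ⟨q, hq, hqe⟩
            have hvv : va ≠ vb := edgeAt_ne G hqe
            refine ⟨Or.inl ⟨⟨q, by omega, hqe⟩, ?_⟩, hvv⟩
            rintro (⟨rfl, rfl⟩ | ⟨rfl, rfl⟩)
            · have hqp := edgeAt_inj G (hqe.trans he.symm)
              rw [hqp] at hq; omega
            · have hqp := edgeAt_inj G (hqe.trans (he.trans Sym2.eq_swap).symm)
              rw [hqp] at hq; omega
          · rintro ⟨⟨⟨q, hq, hqe⟩, hnp⟩ | hc, hvv⟩
            · rcases (exists_lt_succ_iff G p s(va, vb)).1 ⟨q, hq, hqe⟩ with h | h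
              · exact h
              · exfalso
                rcases Sym2.eq_iff.1 (he.symm.trans h) with ⟨rfl, rfl⟩ | ⟨rfl, rfl⟩
                · exact hnp (Or.inl ⟨rfl, rfl⟩)
                · exact hnp (Or.inr ⟨rfl, rfl⟩)
            · rcases hc with ⟨⟨-, hx⟩, -⟩ | ⟨⟨-, hx⟩, -⟩ <;> exact absurd hx h1
        · simp only [Equiv.swap_apply_of_ne_of_ne h1 h2, and_true, true_and]
          constructor
          · rintro ⟨q, hq, hqe⟩
            have hvv : va ≠ vb := edgeAt_ne G hqe
            refine ⟨Or.inl ⟨⟨q, hq, hqe⟩, ?_⟩, hvv⟩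
            rintro (⟨⟨-, hx⟩, -⟩ | ⟨⟨-, hx⟩, -⟩) <;> exact h2 hx
          · rintro ⟨⟨⟨q, hq, hqe⟩, -⟩ | hc, -⟩
            · exact ⟨q, hq, hqe⟩
            · rcases hc with ⟨⟨-, hx⟩, -⟩ | ⟨⟨-, hx⟩, -⟩ <;> exact absurd hx h1
    · have hJ : Equiv.swap p.castSucc p.succ ia ≠ Equiv.swap p.castSucc p.succ ib :=
        fun h => hii ((Equiv.swap p.castSucc p.succ).injective h)
      constructor
      · rintro ⟨h, -⟩
        exact absurd h hJ
      · rintro ⟨⟨⟨h, -⟩, -⟩ | hc, -⟩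
        · exact absurd h hii
        · rcases hc with ⟨⟨-, hx⟩, -, hy⟩ | ⟨⟨-, hx⟩, -, hy⟩ <;>
            exact absurd (hx.trans hy.symm) hii

lemma gadget_nbr (u u' : Fin 2) (huu : u ≠ u') :
    ∀ z, (H' G t).Adj (inl (inr u)) z → z = inl (inr u') := by
  rintro ((⟨b, j⟩ | v) | j') hz
  · rw [addIsolated_adj_inl_inl] at hz
    exact absurd hz (bigAdj_inr_inl G (b, j) u)
  · rw [addIsolated_adj_inl_inl] at hz
    have hvu : v ≠ u := fun h => hz h.symm
    have : v = u' := by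
      have h1 := u.isLt; have h2 := u'.isLt; have h3 := v.isLt
      have hvu' : v.val ≠ u.val := fun h => hvu (Fin.ext h)
      have huu' : u.val ≠ u'.val := fun h => huu (Fin.ext h)
      exact Fin.ext (by omega)
    rw [this]
  · exact absurd hz (addIsolated_not_adj_inr_right _ _ _ _)

/-- swapping a gadget vertex with an isolated `Fin t` vertex is feasible -/
lemma gswap_mem (u u' : Fin 2) (huu : u ≠ u') (j : Fin t) :
    Equiv.swap (inl (inr u) : W' G t) (inr j) ∈ feasiblePerms (H' G t) := by
  set x : W' G t := inl (inr u) with hxdef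
  set y : W' G t := inr j with hydef
  set gu' : W' G t := inl (inr u') with hgudef
  have hxgu : x ≠ gu' := by simp [hxdef, hgudef, huu]
  have hadj : (H' G t).Adj x gu' := by
    rw [hxdef, hgudef, addIsolated_adj_inl_inl]; exact huu
  have hisoy : Isol G t y := isol_inr G t j
  have hxy : x ≠ y := by simp [hxdef, hydef]
  have hygu : y ≠ gu' := by simp [hydef, hgudef]
  apply mem_feasible_of_copy (Equiv.swap x y) x gu' y gu'
  · exact hadj
  · left
    rw [SimpleGraph.compl_adj]
    exact ⟨hygu, fun h => hisoy _ h⟩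
  · ext a b
    show (H' G t).Adj (Equiv.swap x y a) (Equiv.swap x y b) ↔ _
    rw [replaceG_adj]
    rcases eq_or_ne a b with rfl | hab
    · simp
    have hswap : ∀ z : W' G t, z ≠ x → z ≠ y → Equiv.swap x y z = z := fun z h1 h2 =>
      Equiv.swap_apply_of_ne_of_ne h1 h2
    rcases eq_or_ne a x with rfl | hax
    · have hbx : b ≠ x := fun h => hab h.symm
      rcases eq_or_ne b y with rfl | hby
      · -- a = x, b = y
        constructor
        · intro h
          rw [Equiv.swap_apply_left, Equiv.swap_apply_right] at h
          exact absurd h (hisoy _)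
        · rintro ⟨⟨h, -⟩ | h, -⟩
          · exact absurd h.symm (hisoy _)
          · rcases Sym2.eq_iff.1 h with ⟨h1, -⟩ | ⟨h1, -⟩
            · exact absurd h1 hxy
            · exact absurd h1 hxgu
      · -- a = x, b generic
        rw [Equiv.swap_apply_left, hswap b hbx hby]
        constructor
        · intro h
          exact absurd h (hisoy _)
        · rintro ⟨⟨h, hne'⟩ | h, -⟩
          · exact absurd (by rw [gadget_nbr G t u u' huu b h]) hne'
          · rcases Sym2.eq_iff.1 h with ⟨h1, -⟩ | ⟨h1, -⟩
            · exact absurd h1 hxy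
            · exact absurd h1 hxgu
    rcases eq_or_ne a y with rfl | hay
    · have hbey : b ≠ y := fun h => hab h.symm
      rcases eq_or_ne b x with rfl | hbx
      · -- a = y, b = x
        constructor
        · intro h
          rw [Equiv.swap_apply_left, Equiv.swap_apply_right] at h
          exact absurd h.symm (hisoy _)
        · rintro ⟨⟨h, -⟩ | h, -⟩
          · exact absurd h (hisoy _)
          · rcases Sym2.eq_iff.1 h with ⟨-, h1⟩ | ⟨h1, -⟩
            · exact absurd h1 hxgu
            · exact absurd h1 hygu
      · -- a = y, b generic : both sides iff b = gu'
        rw [Equiv.swap_apply_right, hswap b hbx hbey]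
        constructor
        · intro h
          have hb : b = gu' := gadget_nbr G t u u' huu b h
          refine ⟨Or.inr ?_, Ne.symm hbey⟩
          rw [hb]
        · rintro ⟨⟨h, -⟩ | h, -⟩
          · exact absurd h (hisoy _)
          · rcases Sym2.eq_iff.1 h with ⟨-, h1⟩ | ⟨h1, -⟩
            · rw [h1]
              exact hadj
            · exact absurd h1 hygu
    · -- a generic
      have ha := hswap a hax hay
      rcases eq_or_ne b x with rfl | hbx
      · rw [ha, Equiv.swap_apply_left]
        constructor
        · intro h
          exact absurd h.symm (hisoy _)
        · rintro ⟨⟨h, hne'⟩ | h, -⟩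
          · refine absurd ?_ hne'
            have : a = gu' := gadget_nbr G t u u' huu a h.symm
            rw [this, Sym2.eq_swap]
          · rcases Sym2.eq_iff.1 h with ⟨h1, -⟩ | ⟨-, h1⟩
            · exact absurd h1 hay
            · exact absurd h1 hxy
      rcases eq_or_ne b y with rfl | hby
      · rw [ha, Equiv.swap_apply_right]
        constructor
        · intro h
          have : a = gu' := gadget_nbr G t u u' huu a h.symm
          exact ⟨Or.inr (by rw [this, Sym2.eq_swap]), hab⟩
        · rintro ⟨⟨h, -⟩ | h, -⟩
          · exact absurd h.symm (hisoy _)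
          · rcases Sym2.eq_iff.1 h with ⟨h1, -⟩ | ⟨h1, -⟩
            · exact absurd h1 hay
            · rw [h1]
              exact hadj.symm
      · rw [ha, hswap b hbx hby]
        constructor
        · intro h
          refine ⟨Or.inl ⟨h, ?_⟩, hab⟩
          intro hc
          rcases Sym2.eq_iff.1 hc with ⟨h1, -⟩ | ⟨-, h1⟩ <;> [exact hax h1; exact hbx h1]
        · rintro ⟨⟨h, -⟩ | h, -⟩
          · exact h
          · rcases Sym2.eq_iff.1 h with ⟨h1, -⟩ | ⟨-, h1⟩ <;> [exact absurd h1 hay; exact absurd h1 hby]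

/-- any copy can be conveyed down to the isolated `0`-th copy -/
lemma conveyor (i : Fin (numE G + 1)) :
    ∃ g ∈ ampGroup (H' G t), (∀ j : Fin t, g (inr j) = inr j) ∧
      ∀ v : V, g (inl (inl (v, i))) = inl (inl (v, 0)) := by
  induction i using Fin.induction with
  | zero => exact ⟨1, one_mem _, fun j => rfl, fun v => rfl⟩
  | succ p ih =>
      obtain ⟨g, hg, hgt, hgv⟩ := ih
      refine ⟨g * blockSwap G t p,
        mul_mem hg (Subgroup.subset_closure (blockSwap_mem G t p)),
        fun j => by rw [Equiv.Perm.mul_apply, blockSwap_apply_t, hgt], fun v => ?_⟩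
      rw [Equiv.Perm.mul_apply, blockSwap_apply_v, Equiv.swap_apply_right, hgv]

lemma exists_fresh (ht : 5 ≤ t) (x y : W' G t) :
    ∃ k1 k2 : Fin t, k1 ≠ k2 ∧ inr k1 ≠ x ∧ inr k1 ≠ y ∧ inr k2 ≠ x ∧ inr k2 ≠ y := by
  classical
  set f : Fin 5 → W' G t := fun n => inr ⟨n.val, lt_of_lt_of_le n.isLt ht⟩ with hf
  have hfinj : Function.Injective f := by
    intro a b h
    simp only [hf, Sum.inr.injEq, Fin.mk.injEq] at h
    exact Fin.ext h
  have hcard : ∀ z : W' G t, (Finset.univ.filter (fun n => f n = z)).card ≤ 1 := by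
    intro z
    refine Finset.card_le_one.2 (fun a ha b hb => hfinj ?_)
    rw [(Finset.mem_filter.1 ha).2, (Finset.mem_filter.1 hb).2]
  have hsub : Finset.univ.filter (fun n => f n = x ∨ f n = y) ⊆
      (Finset.univ.filter (fun n => f n = x)) ∪ (Finset.univ.filter (fun n => f n = y)) := by
    intro n hn
    rw [Finset.mem_filter] at hn
    rcases hn.2 with h | h
    · exact Finset.mem_union_left _ (Finset.mem_filter.2 ⟨hn.1, h⟩)
    · exact Finset.mem_union_right _ (Finset.mem_filter.2 ⟨hn.1, h⟩)
  have hb2 : (Finset.univ.filter (fun n => f n = x ∨ f n = y)).card ≤ 2 := by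
    refine le_trans (Finset.card_le_card hsub) (le_trans (Finset.card_union_le _ _) ?_)
    have := hcard x; have := hcard y; omega
  have hc : 1 < (Finset.univ.filter (fun n => ¬(f n = x ∨ f n = y))).card := by
    have htot := Finset.card_filter_add_card_filter_not
      (s := (Finset.univ : Finset (Fin 5))) (p := fun n => f n = x ∨ f n = y)
    have h5 : (Finset.univ : Finset (Fin 5)).card = 5 := by simp
    omega
  obtain ⟨a, ha, b, hb, hab⟩ := Finset.one_lt_card.1 hc
  rw [Finset.mem_filter] at ha hb
  push_neg at ha hb
  refine ⟨⟨a.val, lt_of_lt_of_le a.isLt ht⟩, ⟨b.val, lt_of_lt_of_le b.isLt ht⟩,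
    ?_, ha.2.1, ha.2.2, hb.2.1, hb.2.2⟩
  intro h
  exact hab (Fin.ext (by simpa [Fin.ext_iff] using h))

theorem main_top (ht : 5 ≤ t) : ampGroup (H' G t) = ⊤ := by
  have hswapK : ∀ x y : W' G t, Isol G t x → Isol G t y → x ≠ y →
      Equiv.swap x y ∈ ampGroup (H' G t) :=
    fun x y hx hy hxy => Subgroup.subset_closure (swap_isol_mem G t hx hy hxy)
  have claim1 : ∀ x : W' G t, ∃ c : Fin t, inr c ≠ x ∧
      Equiv.swap x (inr c) ∈ ampGroup (H' G t) := by
    rintro ((⟨v, i⟩ | u) | j₀)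
    · obtain ⟨g, hg, hgt, hgv⟩ := conveyor G t i
      set a : W' G t := inl (inl (v, 0)) with hadef
      set c : Fin t := ⟨2, by omega⟩ with hcdef
      have hswap_ab : Equiv.swap a (inr c) ∈ ampGroup (H' G t) :=
        hswapK _ _ (isol_zero G t v) (isol_inr G t _) (by simp [hadef])
      have hconj : g⁻¹ * Equiv.swap a (inr c) * g ∈ ampGroup (H' G t) :=
        mul_mem (mul_mem (inv_mem hg) hswap_ab) hg
      refine ⟨c, by simp, ?_⟩
      have hkey : Equiv.swap (g⁻¹ a) (g⁻¹ (inr c)) = g⁻¹ * Equiv.swap a (inr c) * g := by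
        rw [Equiv.swap_apply_apply, inv_inv]
      have hga : g⁻¹ a = inl (inl (v, i)) := by
        rw [hadef, ← hgv v, Equiv.Perm.inv_def, Equiv.symm_apply_apply]
      have hgb : g⁻¹ (inr c : W' G t) = inr c := by
        conv_lhs => rw [← hgt c]
        rw [Equiv.Perm.inv_def, Equiv.symm_apply_apply]
      rw [← hga, ← hgb, hkey]
      exact hconj
    · refine ⟨⟨0, by omega⟩, by simp, ?_⟩
      have hu := u.isLt
      exact Subgroup.subset_closure
        (gswap_mem G t u ⟨1 - u.val, by omega⟩
          (by intro h; have := congrArg Fin.val h; simp at this; omega) _)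
    · by_cases h : j₀.val = 0
      · refine ⟨⟨1, by omega⟩, ?_, hswapK _ _ (isol_inr G t _) (isol_inr G t _) ?_⟩ <;>
          simp [Sum.inr.injEq, Fin.ext_iff] <;> omega
      · refine ⟨⟨0, by omega⟩, ?_, hswapK _ _ (isol_inr G t _) (isol_inr G t _) ?_⟩ <;>
          simp [Sum.inr.injEq, Fin.ext_iff] <;> omega
  have step : ∀ (z : W' G t) (c d : Fin t), inr c ≠ z → inr d ≠ z →
      Equiv.swap z (inr c) ∈ ampGroup (H' G t) → Equiv.swap z (inr d) ∈ ampGroup (H' G t) := by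
    intro z c d hcz hdz hs
    by_cases hcd : c = d
    · rwa [hcd] at hs
    · have hwK : Equiv.swap (inr c : W' G t) (inr d) ∈ ampGroup (H' G t) :=
        hswapK _ _ (isol_inr G t _) (isol_inr G t _) (by simp [hcd])
      have hkey := Equiv.swap_apply_apply (Equiv.swap (inr c : W' G t) (inr d)) z (inr c)
      rw [Equiv.swap_apply_of_ne_of_ne (fun h => hcz h.symm) (fun h => hdz h.symm),
        Equiv.swap_apply_left] at hkey
      rw [hkey]
      exact mul_mem (mul_mem hwK hs) (inv_mem hwK)
  have claim2 : ∀ x y : W' G t, x ≠ y → Equiv.swap x y ∈ ampGroup (H' G t) := by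
    intro x y hxy
    obtain ⟨c1, hc1x, hs1⟩ := claim1 x
    obtain ⟨c2, hc2y, hs2⟩ := claim1 y
    obtain ⟨k1, k2, hk12, hk1x, hk1y, hk2x, hk2y⟩ := exists_fresh G t ht x y
    have hA : Equiv.swap x (inr k1) ∈ ampGroup (H' G t) := step x c1 k1 hc1x hk1x hs1
    have hB : Equiv.swap y (inr k2) ∈ ampGroup (H' G t) := step y c2 k2 hc2y hk2y hs2
    have hk : Equiv.swap (inr k1 : W' G t) (inr k2) ∈ ampGroup (H' G t) :=
      hswapK _ _ (isol_inr G t _) (isol_inr G t _) (by simp [hk12])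
    have hC : Equiv.swap x (inr k2) ∈ ampGroup (H' G t) := by
      have hkey := Equiv.swap_apply_apply (Equiv.swap x (inr k1)) (inr k1 : W' G t) (inr k2)
      rw [Equiv.swap_apply_right,
        Equiv.swap_apply_of_ne_of_ne hk2x (fun h => hk12 (Sum.inr.inj h).symm)] at hkey
      rw [hkey]
      exact mul_mem (mul_mem hA hk) (inv_mem hA)
    have hkey := Equiv.swap_apply_apply (Equiv.swap y (inr k2)) x (inr k2)
    rw [Equiv.swap_apply_of_ne_of_ne hxy (Ne.symm hk2x), Equiv.swap_apply_right] at hkey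
    rw [hkey]
    exact mul_mem (mul_mem hB hC) (inv_mem hB)
  rw [eq_top_iff, ← Equiv.Perm.closure_isSwap]
  refine (Subgroup.closure_le _).2 ?_
  rintro σ ⟨x, y, hxy, rfl⟩
  exact claim2 x y hxy

theorem bigH_global : GlobalAmoeba (bigH G) := ⟨5, fun t ht => main_top G t ht⟩

end Amoeba

end Stmt17Aux

theorem stmt17 {V : Type} [Fintype V] (G : SimpleGraph V) (hG : G.Connected) :
    ∃ (W : Type) (_ : Fintype W) (H : SimpleGraph W), GlobalAmoeba H ∧
      ∃ f : G ↪g H, ∀ (a : V) (w : W), H.Adj (f a) w → ∃ b : V, w = f b := by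
  classical
  refine ⟨Stmt17Aux.BigV G, inferInstance, Stmt17Aux.bigH G, Stmt17Aux.bigH_global G, ?_⟩
  refine ⟨⟨⟨fun v => Sum.inl (v, Fin.last _), fun a b h => ?_⟩, ?_⟩, ?_⟩
  · exact (Prod.mk.injEq _ _ _ _ ▸ Sum.inl.inj h).1
  · intro a b
    show (Stmt17Aux.bigH G).Adj (Sum.inl (a, Fin.last _)) (Sum.inl (b, Fin.last _)) ↔ G.Adj a b
    rw [Stmt17Aux.bigH_adj, Stmt17Aux.bigAdj_inl_inl]
    constructor
    · rintro ⟨-, p, -, hp⟩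
      exact (SimpleGraph.mem_edgeSet G).1 (hp ▸ Stmt17Aux.edgeAt_mem G p)
    · intro h
      obtain ⟨p, hp⟩ := Stmt17Aux.edgeAt_surj G ((SimpleGraph.mem_edgeSet G).2 h)
      exact ⟨rfl, p, by simp, hp⟩
  · rintro a ((⟨b, j⟩ | u)) h
    · refine ⟨b, ?_⟩
      have hj : Fin.last _ = j := ((Stmt17Aux.bigAdj_inl_inl G a b _ j).1 h).1
      subst hj
      rfl
    · exact (Stmt17Aux.bigAdj_inl_inr G (a, Fin.last _) u h).elim
end

section
/- For every n ≥ 2, the graph H_n is both a local amoeba and a global amoeba, has minimum degree 1, has exactly ⌊n²/4⌋ edges, and has clique number ⌊n/2⌋ + 1. Here H_n is the graph on vertex set A ∪ B with A = {v_1,...,v_q}, q = ⌊n/2⌋, and B = {v_{q+1},...,v_n}, where B is a clique, A is an independent set, and v_i v_{q+j} ∈ E(H_n) if and only if j ≤ i. Equivalently, H_n is the unique graph of order n whose degree set, with multiplicity, realizes every degree in {1,...,n−1} (with ⌊n/2⌋ repeated), satisfying H_n ≅ complement of (H_{n−1} ∪ K_1). -/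
open SimpleGraph Equiv

/-- The graph `H_n`: with `q = ⌊n/2⌋`, the vertices with indices `< q` (this is `A`, where
index `i-1` stands for `v_i`) form an independent set, the vertices with indices `≥ q`
(this is `B`, where index `q+j-1` stands for `v_{q+j}`) form a clique, and `v_i v_{q+j}`
is an edge iff `j ≤ i`, i.e. a vertex `a ∈ A` and a vertex `b ∈ B` are adjacent
iff `b.val ≤ a.val + q`. -/
def Hgraph (n : ℕ) : SimpleGraph (Fin n) where
  Adj a b := a ≠ b ∧
    ((n / 2 ≤ a.val ∧ n / 2 ≤ b.val) ∨
     (a.val < n / 2 ∧ n / 2 ≤ b.val ∧ b.val ≤ a.val + n / 2) ∨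
     (b.val < n / 2 ∧ n / 2 ≤ a.val ∧ a.val ≤ b.val + n / 2))
  symm := by
    refine ⟨?_⟩
    rintro a b ⟨h1, h2⟩
    exact ⟨fun e => h1 e.symm, by tauto⟩
  loopless := ⟨fun a h => h.1 rfl⟩

instance (n : ℕ) : DecidableRel (Hgraph n).Adj := fun a b =>
  inferInstanceAs (Decidable (a ≠ b ∧
    ((n / 2 ≤ a.val ∧ n / 2 ≤ b.val) ∨
     (a.val < n / 2 ∧ n / 2 ≤ b.val ∧ b.val ≤ a.val + n / 2) ∨
     (b.val < n / 2 ∧ n / 2 ≤ a.val ∧ a.val ≤ b.val + n / 2))))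

@[simp] lemma copyG_adj {V : Type*} (G : SimpleGraph V) (σ : Equiv.Perm V) (a b : V) :
    (copyG G σ).Adj a b ↔ G.Adj (σ a) (σ b) := Iff.rfl

lemma replaceG_adj {V : Type*} (G : SimpleGraph V) (r s k l a b : V) :
    (replaceG G r s k l).Adj a b ↔
      ((G.Adj a b ∧ ¬(s(a, b) = s(r, s))) ∨ s(a, b) = s(k, l)) ∧ a ≠ b := by
  simp only [replaceG, fromEdgeSet_adj, Set.mem_union, Set.mem_diff, Set.mem_singleton_iff,
    mem_edgeSet]

lemma copyG_swap_eq {V : Type*} [DecidableEq V] (G : SimpleGraph V) (x y z : V)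
    (hxy : x ≠ y) (hzy : z ≠ y) (hxz : G.Adj x z) (hyz : ¬G.Adj y z)
    (hsame : ∀ w, w ≠ z → w ≠ x → w ≠ y → (G.Adj x w ↔ G.Adj y w)) :
    copyG G (Equiv.swap x y) = replaceG G x z y z := by
  have hzx : z ≠ x := hxz.ne'
  have hxz' : x ≠ z := hxz.ne
  have hyz' : y ≠ z := hzy.symm
  have hyx : y ≠ x := hxy.symm
  have hsame' : ∀ w, w ≠ z → w ≠ x → w ≠ y → (G.Adj w x ↔ G.Adj w y) := by
    intro w h1 h2 h3
    rw [G.adj_comm w x, G.adj_comm w y]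
    exact hsame w h1 h2 h3
  ext a b
  rw [copyG_adj, replaceG_adj]
  simp only [Sym2.eq_iff]
  rcases eq_or_ne a x with hax | hax
  · rw [hax, Equiv.swap_apply_left]
    rcases eq_or_ne b x with hbx | hbx
    · rw [hbx, Equiv.swap_apply_left]; simp [G.irrefl]
    rcases eq_or_ne b y with hby | hby
    · rw [hby, Equiv.swap_apply_right, G.adj_comm y x]
      simp [hxy, hyz', hxz']
    rcases eq_or_ne b z with hbz | hbz
    · rw [hbz, Equiv.swap_apply_of_ne_of_ne hzx hzy]
      simp [hyz, hxy, hxz']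
    · rw [Equiv.swap_apply_of_ne_of_ne hbx hby, ← hsame b hbz hbx hby]
      constructor
      · intro h
        refine ⟨Or.inl ⟨h, ?_⟩, h.ne⟩
        rintro (⟨-, h2⟩ | ⟨h1, -⟩)
        · exact hbz h2
        · exact hxz' h1
      · rintro ⟨⟨h, -⟩ | h, -⟩
        · exact h
        · rcases h with ⟨h1, -⟩ | ⟨h1, -⟩
          · exact absurd h1 hxy
          · exact absurd h1 hxz'
  rcases eq_or_ne a y with hay | hay
  · rw [hay, Equiv.swap_apply_right]
    rcases eq_or_ne b x with hbx | hbx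
    · rw [hbx, Equiv.swap_apply_left, G.adj_comm x y]
      simp [hyx, hyz', hxz']
    rcases eq_or_ne b y with hby | hby
    · rw [hby, Equiv.swap_apply_right]; simp [G.irrefl]
    rcases eq_or_ne b z with hbz | hbz
    · rw [hbz, Equiv.swap_apply_of_ne_of_ne hzx hzy]
      simp [hxz, hyz', hyx]
    · rw [Equiv.swap_apply_of_ne_of_ne hbx hby, ← hsame b hbz hbx hby]
      constructor
      · intro h
        refine ⟨Or.inl ⟨h, ?_⟩, Ne.symm hby⟩
        rintro (⟨h1, -⟩ | ⟨h1, -⟩)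
        · exact hyx h1
        · exact hyz' h1
      · rintro ⟨⟨h, -⟩ | h, -⟩
        · exact h
        · rcases h with ⟨-, h2⟩ | ⟨h1, -⟩
          · exact absurd h2 hbz
          · exact absurd h1 hyz'
  · rw [Equiv.swap_apply_of_ne_of_ne hax hay]
    have haz : a ≠ z → (G.Adj a x ↔ G.Adj a y) := fun h => hsame' a h hax hay
    rcases eq_or_ne b x with hbx | hbx
    · rw [hbx, Equiv.swap_apply_left]
      rcases eq_or_ne a z with haz2 | haz2
      · rw [haz2, G.adj_comm z y, G.adj_comm z x]
        simp [hyz, hxz, hzx, hzy, hxy]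
      · rw [← haz haz2]
        constructor
        · intro h
          refine ⟨Or.inl ⟨h, ?_⟩, hax⟩
          rintro (⟨h1, -⟩ | ⟨h1, -⟩)
          · exact hax h1
          · exact haz2 h1
        · rintro ⟨⟨h, -⟩ | h, -⟩
          · exact h
          · rcases h with ⟨h1, -⟩ | ⟨h1, -⟩
            · exact absurd h1 hay
            · exact absurd h1 haz2
    rcases eq_or_ne b y with hby | hby
    · rw [hby, Equiv.swap_apply_right]
      rcases eq_or_ne a z with haz2 | haz2
      · rw [haz2, G.adj_comm z x, G.adj_comm z y]
        simp [hxz, hyz, hzx, hzy, hyx]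
      · rw [← haz haz2]
        constructor
        · intro h
          refine ⟨Or.inl ⟨h, ?_⟩, hay⟩
          rintro (⟨-, h2⟩ | ⟨h1, -⟩)
          · exact hyz' h2
          · exact haz2 h1
        · rintro ⟨⟨h, -⟩ | h, -⟩
          · exact h
          · rcases h with ⟨h1, -⟩ | ⟨h1, -⟩
            · exact absurd h1 hay
            · exact absurd h1 haz2
    · rw [Equiv.swap_apply_of_ne_of_ne hbx hby]
      constructor
      · intro h
        refine ⟨Or.inl ⟨h, ?_⟩, h.ne⟩
        rintro (⟨h1, h2⟩ | ⟨h1, h2⟩)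
        · exact hax h1
        · exact hbx h2
      · rintro ⟨h | h, -⟩
        · exact h.1
        · rcases h with ⟨h1, h2⟩ | ⟨h1, h2⟩
          · exact absurd h1 hay
          · exact absurd h2 hby

section Helpers2
variable {V : Type*}

def copyIso (G : SimpleGraph V) (σ : Equiv.Perm V) : copyG G σ ≃g G where
  toEquiv := σ
  map_rel_iff' := Iff.rfl

lemma replaceG_self (G : SimpleGraph V) {r s : V} (h : G.Adj r s) : replaceG G r s r s = G := by
  ext a b
  rw [replaceG_adj]
  constructor
  · rintro ⟨(⟨h1, -⟩ | h1), hne⟩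
    · exact h1
    · rcases Sym2.eq_iff.1 h1 with ⟨rfl, rfl⟩ | ⟨rfl, rfl⟩
      · exact h
      · exact h.symm
  · intro hadj
    refine ⟨?_, hadj.ne⟩
    by_cases hrs : s(a, b) = s(r, s)
    · exact Or.inr hrs
    · exact Or.inl ⟨hadj, hrs⟩

lemma mem_feasible_of_auto (G : SimpleGraph V) {σ : Equiv.Perm V} {r s : V} (h : G.Adj r s)
    (hσ : copyG G σ = G) : σ ∈ feasiblePerms G :=
  ⟨r, s, r, s, ⟨h, Or.inr rfl, ⟨(replaceG_self G h).symm ▸ (⟨Equiv.refl V, Iff.rfl⟩ : G ≃g G)⟩⟩,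
    by rw [hσ, replaceG_self G h]⟩

lemma swap_mem_feasible [DecidableEq V] (G : SimpleGraph V) {x y z : V}
    (hxy : x ≠ y) (hzy : z ≠ y) (hxz : G.Adj x z) (hyz : ¬G.Adj y z)
    (hsame : ∀ w, w ≠ z → w ≠ x → w ≠ y → (G.Adj x w ↔ G.Adj y w)) :
    Equiv.swap x y ∈ feasiblePerms G := by
  have hcopy := copyG_swap_eq G x y z hxy hzy hxz hyz hsame
  exact ⟨x, z, y, z, ⟨hxz, Or.inl (G.compl_adj y z |>.mpr ⟨hzy.symm, hyz⟩),
    ⟨hcopy ▸ copyIso G (Equiv.swap x y)⟩⟩, hcopy⟩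

lemma swap_chain {α : Type*} [DecidableEq α] {H : Subgroup (Equiv.Perm α)} {x y z : α}
    (hxy : x ≠ y) (hxz : x ≠ z) (h1 : Equiv.swap x y ∈ H) (h2 : Equiv.swap y z ∈ H) :
    Equiv.swap x z ∈ H := by
  rw [Equiv.swap_comm, ← Equiv.swap_mul_swap_mul_swap hxy hxz]
  exact H.mul_mem (H.mul_mem h2 h1) h2

lemma top_of_swaps {α : Type*} [Fintype α] [DecidableEq α] (H : Subgroup (Equiv.Perm α)) (x0 : α)
    (h : ∀ y, y ≠ x0 → Equiv.swap x0 y ∈ H) : H = ⊤ := by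
  rw [eq_top_iff, ← Equiv.Perm.closure_isSwap, Subgroup.closure_le]
  rintro σ ⟨a, b, hab, rfl⟩
  rcases eq_or_ne a x0 with rfl | ha
  · exact h b (fun hb => hab hb.symm)
  rcases eq_or_ne b x0 with rfl | hb
  · rw [Equiv.swap_comm]; exact h a ha
  · exact swap_chain ha hab (Equiv.swap_comm x0 a ▸ h a ha) (h b hb)

end Helpers2

lemma Hgraph_adj {n : ℕ} {a b : Fin n} : (Hgraph n).Adj a b ↔ a.val ≠ b.val ∧
    ((n / 2 ≤ a.val ∧ n / 2 ≤ b.val) ∨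
     (a.val < n / 2 ∧ n / 2 ≤ b.val ∧ b.val ≤ a.val + n / 2) ∨
     (b.val < n / 2 ∧ n / 2 ≤ a.val ∧ a.val ≤ b.val + n / 2)) := by
  show (a ≠ b ∧ _) ↔ _
  rw [Ne, Ne, Fin.ext_iff]

lemma hA_mem {n : ℕ} (hn : 2 ≤ n) (i : ℕ) (h : i + 2 ≤ n / 2) :
    Equiv.swap (⟨i, by omega⟩ : Fin n) ⟨i + 1, by omega⟩ ∈ feasiblePerms (Hgraph n) := by
  rw [Equiv.swap_comm]
  refine swap_mem_feasible (Hgraph n) (x := ⟨i + 1, by omega⟩) (y := ⟨i, by omega⟩)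
    (z := ⟨n / 2 + i + 1, by omega⟩) ?_ ?_ ?_ ?_ ?_
  · simp only [ne_eq, Fin.mk.injEq]; omega
  · simp only [ne_eq, Fin.mk.injEq]; omega
  · rw [Hgraph_adj]; simp only []; omega
  · rw [Hgraph_adj]; simp only []; omega
  · intro w h1 h2 h3
    rw [Ne, Fin.ext_iff] at h1 h2 h3
    have hw := w.isLt
    rw [Hgraph_adj, Hgraph_adj]
    simp only [Fin.val_mk] at *
    omega

lemma hB_mem {n : ℕ} (hn : 2 ≤ n) (i : ℕ) (h1 : n / 2 ≤ i) (h2 : i + 2 ≤ n) :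
    Equiv.swap (⟨i, by omega⟩ : Fin n) ⟨i + 1, by omega⟩ ∈ feasiblePerms (Hgraph n) := by
  refine swap_mem_feasible (Hgraph n) (x := ⟨i, by omega⟩) (y := ⟨i + 1, by omega⟩)
    (z := ⟨i - n / 2, by omega⟩) ?_ ?_ ?_ ?_ ?_
  · simp only [ne_eq, Fin.mk.injEq]; omega
  · simp only [ne_eq, Fin.mk.injEq]; omega
  · rw [Hgraph_adj]; simp only []; omega
  · rw [Hgraph_adj]; simp only []; omega
  · intro w hw1 hw2 hw3
    rw [Ne, Fin.ext_iff] at hw1 hw2 hw3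
    have hw := w.isLt
    rw [Hgraph_adj, Hgraph_adj]
    simp only [Fin.val_mk] at *
    omega

lemma hX_copy {n : ℕ} (hn : 2 ≤ n) :
    copyG (Hgraph n) (Equiv.swap (⟨n / 2 - 1, by omega⟩ : Fin n) ⟨n - 1, by omega⟩) =
      Hgraph n := by
  ext a b
  rw [copyG_adj]
  have ha := a.isLt
  have hb := b.isLt
  simp only [Equiv.swap_apply_def]
  split_ifs <;>
    (simp only [Hgraph_adj, Fin.ext_iff, Fin.mk.injEq] at * <;> omega)

lemma hX_mem {n : ℕ} (hn : 2 ≤ n) :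
    Equiv.swap (⟨n / 2 - 1, by omega⟩ : Fin n) ⟨n - 1, by omega⟩ ∈
      feasiblePerms (Hgraph n) := by
  refine mem_feasible_of_auto (Hgraph n) (r := ⟨0, by omega⟩) (s := ⟨n / 2, by omega⟩) ?_ (hX_copy hn)
  rw [Hgraph_adj]; simp only []; omega

lemma swaps_zero {n : ℕ} {β : Type*} [DecidableEq β] (hn : 2 ≤ n)
    (H : Subgroup (Equiv.Perm β)) (e : Fin n → β) (he : Function.Injective e)
    (hA : ∀ i : ℕ, (h : i + 2 ≤ n / 2) →
      Equiv.swap (e ⟨i, by omega⟩) (e ⟨i + 1, by omega⟩) ∈ H)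
    (hB : ∀ i : ℕ, (h1 : n / 2 ≤ i) → (h2 : i + 2 ≤ n) →
      Equiv.swap (e ⟨i, by omega⟩) (e ⟨i + 1, by omega⟩) ∈ H)
    (hX : Equiv.swap (e ⟨n / 2 - 1, by omega⟩) (e ⟨n - 1, by omega⟩) ∈ H) :
    ∀ j : ℕ, (hj : j < n) → 0 < j → Equiv.swap (e ⟨0, by omega⟩) (e ⟨j, hj⟩) ∈ H := by
  have hne : ∀ (a b : ℕ) (ha : a < n) (hb : b < n), a ≠ b →
      e ⟨a, ha⟩ ≠ e ⟨b, hb⟩ := by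
    intro a b ha hb hab hcon
    have := he hcon
    rw [Fin.ext_iff] at this
    exact hab this
  have key1 : ∀ j : ℕ, (h : j + 1 ≤ n / 2) → 0 < j →
      Equiv.swap (e ⟨0, by omega⟩) (e ⟨j, by omega⟩) ∈ H := by
    intro j
    induction j with
    | zero => intro _ h; omega
    | succ k ih =>
      intro hk _
      rcases Nat.eq_zero_or_pos k with rfl | hkpos
      · exact hA 0 (by omega)
      · exact swap_chain (hne _ _ _ _ (by omega)) (hne _ _ _ _ (by omega))
          (ih (by omega) hkpos) (hA k (by omega))
  have key2 : Equiv.swap (e ⟨0, by omega⟩) (e ⟨n - 1, by omega⟩) ∈ H := by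
    rcases lt_or_ge 1 (n / 2) with hq | hq
    · exact swap_chain (hne _ _ _ _ (by omega)) (hne _ _ _ _ (by omega))
        (key1 (n / 2 - 1) (by omega) (by omega)) hX
    · have ee : (⟨n / 2 - 1, by omega⟩ : Fin n) = ⟨0, by omega⟩ :=
        Fin.mk_eq_mk.mpr (by omega)
      rw [ee] at hX
      exact hX
  have key3 : ∀ d : ℕ, d ≤ n - 1 - n / 2 →
      Equiv.swap (e ⟨0, by omega⟩) (e ⟨n - 1 - d, by omega⟩) ∈ H := by
    intro d
    induction d with
    | zero => intro _; exact key2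
    | succ k ih =>
      intro hk
      have hb := hB (n - 2 - k) (by omega) (by omega)
      have ee : (⟨n - 2 - k + 1, by omega⟩ : Fin n) = ⟨n - 1 - k, by omega⟩ :=
        Fin.mk_eq_mk.mpr (by omega)
      rw [ee] at hb
      have e2 : (⟨n - 2 - k, by omega⟩ : Fin n) = ⟨n - 1 - (k + 1), by omega⟩ :=
        Fin.mk_eq_mk.mpr (by omega)
      rw [e2] at hb
      exact swap_chain (hne _ _ _ _ (by omega)) (hne _ _ _ _ (by omega))
        (ih (by omega))
        (Equiv.swap_comm (e ⟨n - 1 - (k + 1), by omega⟩) (e ⟨n - 1 - k, by omega⟩) ▸ hb)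
  intro j hj hjpos
  rcases le_or_gt (j + 1) (n / 2) with hc | hc
  · exact key1 j hc hjpos
  · have hkey := key3 (n - 1 - j) (by omega)
    have ee : (⟨n - 1 - (n - 1 - j), by omega⟩ : Fin n) = ⟨j, hj⟩ :=
      Fin.mk_eq_mk.mpr (by omega)
    rw [ee] at hkey
    exact hkey

lemma local_Hgraph {n : ℕ} (hn : 2 ≤ n) : LocalAmoeba (Hgraph n) := by
  apply top_of_swaps (ampGroup (Hgraph n)) (⟨0, by omega⟩ : Fin n)
  intro y hy
  have := swaps_zero hn (ampGroup (Hgraph n)) id Function.injective_id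
    (fun i h => Subgroup.subset_closure (hA_mem hn i h))
    (fun i h1 h2 => Subgroup.subset_closure (hB_mem hn i h1 h2))
    (Subgroup.subset_closure (hX_mem hn))
    y.val y.isLt (by rw [Ne, Fin.ext_iff] at hy; simp only [Fin.val_mk] at hy; omega)
  exact this

section Glob
variable {V : Type*}

@[simp] lemma addIso_adj_inl_inl (G : SimpleGraph V) (t : ℕ) (a b : V) :
    (addIsolated G t).Adj (Sum.inl a) (Sum.inl b) ↔ G.Adj a b := by
  simp [addIsolated, sumGraph, SimpleGraph.map_adj']
  exact fun h => h.ne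

@[simp] lemma addIso_adj_inl_inr (G : SimpleGraph V) (t : ℕ) (a : V) (c : Fin t) :
    ¬(addIsolated G t).Adj (Sum.inl a) (Sum.inr c) := by
  simp [addIsolated, sumGraph, SimpleGraph.map_adj']

@[simp] lemma addIso_adj_inr_inl (G : SimpleGraph V) (t : ℕ) (a : V) (c : Fin t) :
    ¬(addIsolated G t).Adj (Sum.inr c) (Sum.inl a) := by
  simp [addIsolated, sumGraph, SimpleGraph.map_adj']

@[simp] lemma addIso_adj_inr_inr (G : SimpleGraph V) (t : ℕ) (c d : Fin t) :
    ¬(addIsolated G t).Adj (Sum.inr c) (Sum.inr d) := by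
  simp [addIsolated, sumGraph, SimpleGraph.map_adj']

lemma copy_addIso (G : SimpleGraph V) (σ : Equiv.Perm V) (t : ℕ) :
    copyG (addIsolated G t) (Equiv.Perm.sumCongr σ (1 : Equiv.Perm (Fin t))) =
      addIsolated (copyG G σ) t := by
  ext a b
  cases a <;> cases b <;>
    simp [Equiv.Perm.sumCongr_apply]

lemma replace_addIso (G : SimpleGraph V) (t : ℕ) (r s k l : V) :
    replaceG (addIsolated G t) (Sum.inl r) (Sum.inl s) (Sum.inl k) (Sum.inl l) =
      addIsolated (replaceG G r s k l) t := by
  ext a b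
  rw [replaceG_adj]
  cases a <;> cases b <;>
    simp [replaceG_adj, Sym2.eq_iff]

lemma feasible_lift (G : SimpleGraph V) (t : ℕ) {σ : Equiv.Perm V}
    (h : σ ∈ feasiblePerms G) :
    Equiv.Perm.sumCongr σ (1 : Equiv.Perm (Fin t)) ∈ feasiblePerms (addIsolated G t) := by
  obtain ⟨r, s, k, l, ⟨hrs, hc, -⟩, hcopy⟩ := h
  have hbig : copyG (addIsolated G t) (Equiv.Perm.sumCongr σ (1 : Equiv.Perm (Fin t))) =
      replaceG (addIsolated G t) (Sum.inl r) (Sum.inl s) (Sum.inl k) (Sum.inl l) := by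
    rw [copy_addIso, hcopy, replace_addIso]
  refine ⟨Sum.inl r, Sum.inl s, Sum.inl k, Sum.inl l,
    ⟨(addIso_adj_inl_inl G t r s).mpr hrs, ?_, ⟨hbig ▸ copyIso _ _⟩⟩, hbig⟩
  rcases hc with hc | hc
  · left
    rw [compl_adj] at hc ⊢
    simpa using hc
  · right
    rw [Sym2.eq_iff] at hc ⊢
    rcases hc with ⟨rfl, rfl⟩ | ⟨rfl, rfl⟩
    · left; exact ⟨rfl, rfl⟩
    · right; exact ⟨rfl, rfl⟩

lemma iso_swap_mem {n : ℕ} (hn : 2 ≤ n) (t : ℕ) (c : Fin t) :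
    Equiv.swap (Sum.inl (⟨0, by omega⟩ : Fin n)) (Sum.inr c : Fin n ⊕ Fin t) ∈
      feasiblePerms (addIsolated (Hgraph n) t) := by
  refine swap_mem_feasible (addIsolated (Hgraph n) t)
    (x := Sum.inl ⟨0, by omega⟩) (y := Sum.inr c) (z := Sum.inl ⟨n / 2, by omega⟩)
    (by simp) (by simp) ?_ (by simp) ?_
  · rw [addIso_adj_inl_inl, Hgraph_adj]
    simp only [Fin.val_mk]
    omega
  · rintro (d | d) h1 h2 h3
    · simp only [addIso_adj_inl_inl, addIso_adj_inr_inl, iff_false]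
      rw [Hgraph_adj]
      have hd := d.isLt
      have : d.val ≠ n / 2 := by
        intro hh
        exact h1 (by congr 1; exact Fin.ext_iff.mpr hh)
      simp only [Fin.val_mk]
      omega
    · simp

lemma global_Hgraph {n : ℕ} (hn : 2 ≤ n) : GlobalAmoeba (Hgraph n) := by
  refine ⟨0, fun t _ => ?_⟩
  apply top_of_swaps (ampGroup (addIsolated (Hgraph n) t)) (Sum.inl (⟨0, by omega⟩ : Fin n))
  intro y hy
  have hswap : ∀ a b : Fin n, Equiv.swap a b ∈ feasiblePerms (Hgraph n) →
      Equiv.swap (Sum.inl a : Fin n ⊕ Fin t) (Sum.inl b) ∈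
        ampGroup (addIsolated (Hgraph n) t) := by
    intro a b hab
    have := Subgroup.subset_closure (feasible_lift (Hgraph n) t hab)
    rwa [Equiv.Perm.sumCongr_swap_one] at this
  obtain (v | c) := y
  · have hv : 0 < v.val := by
      rcases Nat.eq_zero_or_pos v.val with h0 | h0
      · exact absurd (congrArg Sum.inl (Fin.ext_iff.mpr h0)) hy
      · exact h0
    exact swaps_zero hn (ampGroup (addIsolated (Hgraph n) t))
      (Sum.inl : Fin n → Fin n ⊕ Fin t) Sum.inl_injective
      (fun i h => hswap _ _ (hA_mem hn i h))
      (fun i h1 h2 => hswap _ _ (hB_mem hn i h1 h2))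
      (hswap _ _ (hX_mem hn))
      v.val v.isLt hv
  · exact Subgroup.subset_closure (iso_swap_mem hn t c)

end Glob

lemma card_filter_fin (n : ℕ) (P : ℕ → Prop) [DecidablePred P] :
    (Finset.univ.filter (fun v : Fin n => P v.val)).card =
      ((Finset.range n).filter P).card := by
  refine Finset.card_bij' (fun v _ => v.val)
    (fun i hi => ⟨i, (Finset.mem_range.mp (Finset.mem_filter.mp hi).1)⟩) ?_ ?_ ?_ ?_
  all_goals intro x hx
  all_goals simp only [Finset.mem_filter, Finset.mem_range, Finset.mem_univ, true_and,
    Fin.val_mk] at hx ⊢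
  all_goals first
    | rfl
    | exact ⟨x.isLt, hx.2⟩
    | exact hx.2
    | exact hx
    | exact ⟨x.isLt, hx⟩

lemma Hgraph_neighbors {n : ℕ} (v : Fin n) :
    (Hgraph n).degree v = (Finset.univ.filter (fun w : Fin n =>
      (Hgraph n).Adj v w)).card := by
  rw [← SimpleGraph.card_neighborFinset_eq_degree]
  congr 1
  ext w
  simp [SimpleGraph.mem_neighborFinset]

lemma Hgraph_degA {n : ℕ} (hn : 2 ≤ n) (a : ℕ) (h : a < n / 2) :
    (Hgraph n).degree ⟨a, by omega⟩ = a + 1 := by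
  rw [Hgraph_neighbors]
  have e1 : (Finset.univ.filter (fun w : Fin n => (Hgraph n).Adj ⟨a, by omega⟩ w)) =
      Finset.univ.filter (fun w : Fin n => n / 2 ≤ w.val ∧ w.val ≤ a + n / 2) := by
    apply Finset.filter_congr
    intro w _
    have hw := w.isLt
    rw [Hgraph_adj]
    simp only [Fin.val_mk]
    omega
  rw [e1, card_filter_fin n (fun w => n / 2 ≤ w ∧ w ≤ a + n / 2)]
  have e2 : (Finset.range n).filter (fun w => n / 2 ≤ w ∧ w ≤ a + n / 2) =
      Finset.Ico (n / 2) (a + n / 2 + 1) := by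
    ext i
    simp only [Finset.mem_filter, Finset.mem_range, Finset.mem_Ico]
    omega
  rw [e2, Nat.card_Ico]
  omega

lemma Hgraph_degB {n : ℕ} (hn : 2 ≤ n) (b : ℕ) (h1 : n / 2 ≤ b) (hb : b < n) :
    (Hgraph n).degree ⟨b, hb⟩ = n - 1 - (b - n / 2) := by
  rw [Hgraph_neighbors]
  have e1 : (Finset.univ.filter (fun w : Fin n => (Hgraph n).Adj ⟨b, hb⟩ w)) =
      Finset.univ.filter (fun w : Fin n => (b - n / 2 ≤ w.val ∧ w.val < n) ∧ w.val ≠ b) := by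
    apply Finset.filter_congr
    intro w _
    have hw := w.isLt
    rw [Hgraph_adj]
    simp only [Fin.val_mk]
    omega
  rw [e1, card_filter_fin n (fun w => (b - n / 2 ≤ w ∧ w < n) ∧ w ≠ b)]
  have e2 : (Finset.range n).filter (fun w => (b - n / 2 ≤ w ∧ w < n) ∧ w ≠ b) =
      (Finset.Ico (b - n / 2) n).erase b := by
    ext i
    simp only [Finset.mem_filter, Finset.mem_range, Finset.mem_Ico, Finset.mem_erase]
    omega
  rw [e2, Finset.card_erase_of_mem (by simp only [Finset.mem_Ico]; omega), Nat.card_Ico]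
  omega

lemma two_mul_sum_succ : ∀ m : ℕ, 2 * ∑ i ∈ Finset.range m, (i + 1) = m * (m + 1) := by
  intro m
  induction m with
  | zero => rfl
  | succ k ih =>
    rw [Finset.sum_range_succ, Nat.mul_add, ih]
    ring

lemma two_mul_sum_sub (c : ℕ) : ∀ k : ℕ, k ≤ c + 1 →
    2 * ∑ i ∈ Finset.range k, (c - i) = k * (2 * c + 1 - k) := by
  intro k
  induction k with
  | zero => intro _; simp
  | succ k ih =>
    intro hk
    rw [Finset.sum_range_succ, Nat.mul_add, ih (by omega)]
    have h1 : k ≤ c := by omega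
    have h2 : k ≤ 2 * c + 1 := by omega
    have h3 : k + 1 ≤ 2 * c + 1 := by omega
    zify [h1, h2, h3]
    ring

lemma Hgraph_card_edges {n : ℕ} (hn : 2 ≤ n) :
    (Hgraph n).edgeFinset.card = n ^ 2 / 4 := by
  classical
  have hdeg : ∀ v : Fin n, (Hgraph n).degree v =
      (if v.val < n / 2 then v.val + 1 else n - 1 - (v.val - n / 2)) := by
    intro v
    rcases lt_or_ge v.val (n / 2) with hc | hc
    · rw [if_pos hc]
      have := Hgraph_degA hn v.val hc
      rwa [Fin.eta] at this
    · rw [if_neg (by omega)]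
      have := Hgraph_degB hn v.val hc v.isLt
      rwa [Fin.eta] at this
  have hsum := SimpleGraph.sum_degrees_eq_twice_card_edges (Hgraph n)
  rw [Finset.sum_congr rfl (fun v _ => hdeg v)] at hsum
  rw [Fin.sum_univ_eq_sum_range
    (fun i => if i < n / 2 then i + 1 else n - 1 - (i - n / 2)) n] at hsum
  -- split the range sum
  have hsplit : ∑ i ∈ Finset.range n, (if i < n / 2 then i + 1 else n - 1 - (i - n / 2)) =
      (∑ i ∈ Finset.range (n / 2), (i + 1)) +
      ∑ i ∈ Finset.range (n - n / 2), (n - 1 - i) := by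
    rw [← Finset.sum_range_add_sum_Ico
      (fun i => if i < n / 2 then i + 1 else n - 1 - (i - n / 2)) (Nat.div_le_self n 2)]
    congr 1
    · refine Finset.sum_congr rfl fun i hi => ?_
      rw [if_pos (Finset.mem_range.mp hi)]
    · rw [Finset.sum_Ico_eq_sum_range]
      refine Finset.sum_congr rfl fun i _ => ?_
      rw [if_neg (by omega)]
      omega
  rw [hsplit] at hsum
  have h1 := two_mul_sum_succ (n / 2)
  have h2 := two_mul_sum_sub (n - 1) (n - n / 2) (by omega)
  -- 4 * card = 2*(sumA + sumB); compute
  have h4 : 4 * (Hgraph n).edgeFinset.card =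
      n / 2 * (n / 2 + 1) + (n - n / 2) * (2 * (n - 1) + 1 - (n - n / 2)) := by
    omega
  have key : n / 2 * (n / 2 + 1) + (n - n / 2) * (2 * (n - 1) + 1 - (n - n / 2)) =
      4 * (n ^ 2 / 4) := by
    rcases Nat.even_or_odd n with ⟨m, hm⟩ | ⟨m, hm⟩
    · have hm1 : 1 ≤ m := by omega
      have e1 : n / 2 = m := by omega
      have e2 : n - n / 2 = m := by omega
      have e3 : 2 * (n - 1) + 1 - (n - n / 2) = 3 * m - 1 := by omega
      have e4 : n ^ 2 = 4 * (m * m) := by subst hm; ring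
      have e5 : n ^ 2 / 4 = m * m := by omega
      rw [e3, e2, e1, e5]
      zify [show 1 ≤ 3 * m by omega]
      ring
    · have hm1 : 1 ≤ m := by omega
      have e1 : n / 2 = m := by omega
      have e2 : n - n / 2 = m + 1 := by omega
      have e3 : 2 * (n - 1) + 1 - (n - n / 2) = 3 * m := by omega
      have e4 : n ^ 2 = 4 * (m * m + m) + 1 := by subst hm; ring
      have e5 : n ^ 2 / 4 = m * m + m := by omega
      rw [e3, e2, e1, e5]
      ring
  omega

lemma Hgraph_cliqueNum {n : ℕ} (hn : 2 ≤ n) : (Hgraph n).cliqueNum = n / 2 + 1 := by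
  classical
  have hlow : n / 2 + 1 ≤ (Hgraph n).cliqueNum := by
    have hclique : (Hgraph n).IsClique
        (Finset.univ.filter (fun v : Fin n => n - 1 - n / 2 ≤ v.val)) := by
      intro x hx y hy hxy
      simp only [Finset.coe_filter, Set.mem_setOf_eq, Finset.mem_univ, true_and] at hx hy
      have hx2 := x.isLt
      have hy2 := y.isLt
      have hne : x.val ≠ y.val := fun h => hxy (Fin.ext_iff.mpr h)
      rw [Hgraph_adj]
      omega
    have hcard : (Finset.univ.filter (fun v : Fin n => n - 1 - n / 2 ≤ v.val)).card
        = n / 2 + 1 := by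
      rw [card_filter_fin n (fun v => n - 1 - n / 2 ≤ v)]
      have e2 : (Finset.range n).filter (fun v => n - 1 - n / 2 ≤ v) =
          Finset.Ico (n - 1 - n / 2) n := by
        ext i
        simp only [Finset.mem_filter, Finset.mem_range, Finset.mem_Ico]
        omega
      rw [e2, Nat.card_Ico]
      omega
    calc n / 2 + 1
        = (Finset.univ.filter (fun v : Fin n => n - 1 - n / 2 ≤ v.val)).card := hcard.symm
      _ ≤ (Hgraph n).cliqueNum := SimpleGraph.IsClique.card_le_cliqueNum (tc := hclique)
  have hup : (Hgraph n).cliqueNum ≤ n / 2 + 1 := by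
    obtain ⟨s, hs⟩ := SimpleGraph.exists_isNClique_cliqueNum (G := Hgraph n)
    rw [← hs.card_eq]
    by_cases hex : ∃ a ∈ s, a.val < n / 2
    · obtain ⟨a, ha, halt⟩ := hex
      have hsub : s ⊆ insert a (Finset.univ.filter
          (fun w : Fin n => n / 2 ≤ w.val ∧ w.val ≤ a.val + n / 2)) := by
        intro x hx
        rcases eq_or_ne x a with rfl | hne
        · exact Finset.mem_insert_self _ _
        · refine Finset.mem_insert_of_mem ?_
          have hadj : (Hgraph n).Adj a x := hs.isClique ha hx (Ne.symm hne)
          rw [Hgraph_adj] at hadj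
          simp only [Finset.mem_filter, Finset.mem_univ, true_and]
          omega
      calc s.card ≤ _ := Finset.card_le_card hsub
        _ ≤ (Finset.univ.filter
            (fun w : Fin n => n / 2 ≤ w.val ∧ w.val ≤ a.val + n / 2)).card + 1 :=
          Finset.card_insert_le _ _
        _ ≤ n / 2 + 1 := by
          rw [card_filter_fin n (fun w => n / 2 ≤ w ∧ w ≤ a.val + n / 2)]
          have e2 : (Finset.range n).filter (fun w => n / 2 ≤ w ∧ w ≤ a.val + n / 2) =
              Finset.Ico (n / 2) (min n (a.val + n / 2 + 1)) := by
            ext i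
            simp only [Finset.mem_filter, Finset.mem_range, Finset.mem_Ico]
            omega
          rw [e2, Nat.card_Ico]
          omega
    · push_neg at hex
      have hsub : s ⊆ Finset.univ.filter (fun w : Fin n => n / 2 ≤ w.val) := by
        intro x hx
        simp only [Finset.mem_filter, Finset.mem_univ, true_and]
        exact hex x hx
      calc s.card ≤ _ := Finset.card_le_card hsub
        _ ≤ n / 2 + 1 := by
          rw [card_filter_fin n (fun w => n / 2 ≤ w)]
          have e2 : (Finset.range n).filter (fun w => n / 2 ≤ w) =
              Finset.Ico (n / 2) n := by
            ext i
            simp only [Finset.mem_filter, Finset.mem_range, Finset.mem_Ico]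
            omega
          rw [e2, Nat.card_Ico]
          omega
  omega

lemma Hgraph_iso_compl {n : ℕ} (hn : 2 ≤ n) :
    Nonempty (Hgraph n ≃g (addIsolated (Hgraph (n - 1)) 1)ᶜ) := by
  have hqq : (n - 1) / 2 + n / 2 = n - 1 := by omega
  refine ⟨⟨⟨fun v => if h : v.val < n / 2 then
        Sum.inl ⟨(n - 1) / 2 + v.val, by have := v.isLt; omega⟩
      else if h2 : v.val = n / 2 then Sum.inr 0
      else Sum.inl ⟨v.val - n / 2 - 1, by have := v.isLt; omega⟩,
    fun c => match c with
      | Sum.inl c => if h : c.val < (n - 1) / 2 then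
          ⟨c.val + n / 2 + 1, by have := c.isLt; omega⟩
        else ⟨c.val - (n - 1) / 2, by have := c.isLt; omega⟩
      | Sum.inr _ => ⟨n / 2, by omega⟩,
    ?_, ?_⟩, ?_⟩⟩
  · -- left inverse
    intro v
    have hv := v.isLt
    dsimp only
    by_cases h : v.val < n / 2
    · rw [dif_pos h]
      simp only []
      rw [dif_neg (by first | omega | (simp only [Fin.val_mk]; omega))]
      exact Fin.ext_iff.mpr (by first | omega | (simp only [Fin.val_mk]; omega))
    by_cases h2 : v.val = n / 2
    · rw [dif_neg h, dif_pos h2]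
      simp only []
      exact Fin.ext_iff.mpr (by first | omega | (simp only [Fin.val_mk]; omega))
    · rw [dif_neg h, dif_neg h2]
      simp only []
      rw [dif_pos (by first | omega | (simp only [Fin.val_mk]; omega))]
      exact Fin.ext_iff.mpr (by first | omega | (simp only [Fin.val_mk]; omega))
  · -- right inverse
    rintro (c | c)
    · have hc := c.isLt
      dsimp only
      by_cases h : c.val < (n - 1) / 2
      · rw [dif_pos h]
        simp only []
        rw [dif_neg (by first | omega | (simp only [Fin.val_mk]; omega)), dif_neg (by first | omega | (simp only [Fin.val_mk]; omega))]
        exact congrArg Sum.inl (Fin.ext_iff.mpr (by first | omega | (simp only [Fin.val_mk]; omega)))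
      · rw [dif_neg h]
        simp only []
        rw [dif_pos (by first | omega | (simp only [Fin.val_mk]; omega))]
        exact congrArg Sum.inl (Fin.ext_iff.mpr (by first | omega | (simp only [Fin.val_mk]; omega)))
    · dsimp only
      rw [dif_neg (by first | omega | (simp only [Fin.val_mk]; omega)), dif_pos (by rfl)]
      exact congrArg Sum.inr (Subsingleton.elim _ _)
  · -- map_rel_iff
    intro a b
    simp only [Equiv.coe_fn_mk]
    have ha := a.isLt
    have hb := b.isLt
    by_cases ha1 : a.val < n / 2 <;> by_cases hb1 : b.val < n / 2
    · rw [dif_pos ha1, dif_pos hb1]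
      rw [SimpleGraph.compl_adj, Hgraph_adj]
      simp only [ne_eq, Sum.inl.injEq, Fin.mk.injEq, addIso_adj_inl_inl, Hgraph_adj, Fin.val_mk]
      omega
    · rw [dif_pos ha1, dif_neg hb1]
      by_cases hb2 : b.val = n / 2
      · rw [dif_pos hb2]
        rw [SimpleGraph.compl_adj, Hgraph_adj]
        simp only [ne_eq, Fin.val_mk, reduceCtorEq, not_false_eq_true, true_and]
        constructor
        · intro _; omega
        · intro _; exact addIso_adj_inl_inr _ _ _ _
      · rw [dif_neg hb2]
        rw [SimpleGraph.compl_adj, Hgraph_adj]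
        simp only [ne_eq, Sum.inl.injEq, Fin.mk.injEq, addIso_adj_inl_inl, Hgraph_adj, Fin.val_mk]
        omega
    · rw [dif_neg ha1]
      by_cases ha2 : a.val = n / 2
      · rw [dif_pos ha2, dif_pos hb1]
        rw [SimpleGraph.compl_adj, Hgraph_adj]
        simp only [ne_eq, Fin.val_mk, reduceCtorEq, not_false_eq_true, true_and]
        constructor
        · intro _; omega
        · intro _; exact addIso_adj_inr_inl _ _ _ _
      · rw [dif_neg ha2, dif_pos hb1]
        rw [SimpleGraph.compl_adj, Hgraph_adj]
        simp only [ne_eq, Sum.inl.injEq, Fin.mk.injEq, addIso_adj_inl_inl, Hgraph_adj, Fin.val_mk]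
        omega
    · rw [dif_neg ha1]
      by_cases ha2 : a.val = n / 2 <;> by_cases hb2 : b.val = n / 2
      · rw [dif_pos ha2, dif_neg hb1, dif_pos hb2]
        rw [SimpleGraph.compl_adj, Hgraph_adj]
        constructor
        · rintro ⟨h1, -⟩
          exact absurd rfl h1
        · intro h
          exfalso
          omega
      · rw [dif_pos ha2, dif_neg hb1, dif_neg hb2]
        rw [SimpleGraph.compl_adj, Hgraph_adj]
        simp only [ne_eq, Fin.val_mk, reduceCtorEq, not_false_eq_true, true_and]
        constructor
        · intro _; omega
        · intro _; exact addIso_adj_inr_inl _ _ _ _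
      · rw [dif_neg ha2, dif_neg hb1, dif_pos hb2]
        rw [SimpleGraph.compl_adj, Hgraph_adj]
        simp only [ne_eq, Fin.val_mk, reduceCtorEq, not_false_eq_true, true_and]
        constructor
        · intro _; omega
        · intro _; exact addIso_adj_inl_inr _ _ _ _
      · rw [dif_neg ha2, dif_neg hb1, dif_neg hb2]
        rw [SimpleGraph.compl_adj, Hgraph_adj]
        simp only [ne_eq, Sum.inl.injEq, Fin.mk.injEq, addIso_adj_inl_inl, Hgraph_adj, Fin.val_mk]
        omega

theorem stmt18 (n : ℕ) (hn : 2 ≤ n) :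
    LocalAmoeba (Hgraph n) ∧ GlobalAmoeba (Hgraph n) ∧
    (∃ v : Fin n, (Hgraph n).degree v = 1) ∧ (∀ v : Fin n, 1 ≤ (Hgraph n).degree v) ∧
    (Hgraph n).edgeFinset.card = n ^ 2 / 4 ∧
    (Hgraph n).cliqueNum = n / 2 + 1 ∧
    Nonempty (Hgraph n ≃g (addIsolated (Hgraph (n - 1)) 1)ᶜ) := by
  refine ⟨local_Hgraph hn, global_Hgraph hn, ⟨⟨0, by omega⟩, ?_⟩, ?_,
    Hgraph_card_edges hn, Hgraph_cliqueNum hn, Hgraph_iso_compl hn⟩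
  · exact Hgraph_degA hn 0 (by omega)
  · intro v
    rcases lt_or_ge v.val (n / 2) with hc | hc
    · have hd := Hgraph_degA hn v.val hc
      rw [Fin.eta] at hd
      omega
    · have hd := Hgraph_degB hn v.val hc v.isLt
      rw [Fin.eta] at hd
      omega
end
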